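/- arXiv:2110.15591 — 7 statements merged into one kernel-verified Lean document; each statement's English description precedes it below -/
import Mathlib

section
/- (Pyramid structure, case m₃ = m₂ > m₁ ≥ 2) Assume m₃ = m₂ > m₁ ≥ 2. Then for every v ∈ V₁, the point v does not belong to the affine span of S ∖ {v}; hence conv(S) is an m₁-fold pyramid whose apexes are the points of V₁. -/
theorem stmt_12
    (n : ℕ) (hn : 0 < n)
    (S V1 V2 V3 : Finset (Fin (2 * n) → ℝ))
    (h01 : ∀ v ∈ S, ∀ i, v i = 0 ∨ v i = 1)
    (hScard : S.card = n + 2)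
    (hunion : V1 ∪ V2 ∪ V3 = S)
    (hd12 : Disjoint V1 V2) (hd13 : Disjoint V1 V3) (hd23 : Disjoint V2 V3)
    (hne1 : V1.Nonempty) (hne2 : V2.Nonempty) (hne3 : V3.Nonempty)
    (hsum1 : ∑ v ∈ V1, v = fun _ => (1 : ℝ))
    (hsum2 : ∑ v ∈ V2, v = fun _ => (1 : ℝ))
    (hsum3 : ∑ v ∈ V3, v = fun _ => (1 : ℝ))
    (hspan : Module.finrank ℝ (Submodule.span ℝ (S : Set (Fin (2 * n) → ℝ))) = n)
    (hm1 : 2 ≤ V1.card) (h12 : V1.card < V2.card) (h23 : V3.card = V2.card)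
    : ∀ v ∈ V1, v ∉ affineSpan ℝ ((S \ {v} : Finset (Fin (2 * n) → ℝ)) : Set (Fin (2 * n) → ℝ)) := by
  classical
  have hsub1 : V1 ⊆ S := by
    rw [← hunion]; intro x hx; exact Finset.mem_union.2 (Or.inl (Finset.mem_union.2 (Or.inl hx)))
  have hsub2 : V2 ⊆ S := by
    rw [← hunion]; intro x hx; exact Finset.mem_union.2 (Or.inl (Finset.mem_union.2 (Or.inr hx)))
  have hsub3 : V3 ⊆ S := by
    rw [← hunion]; intro x hx; exact Finset.mem_union.2 (Or.inr hx)
  have hsplitE : ∀ f : (Fin (2 * n) → ℝ) → (Fin (2 * n) → ℝ),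
      ∑ u ∈ S, f u = ∑ u ∈ V1, f u + ∑ u ∈ V2, f u + ∑ u ∈ V3, f u := by
    intro f
    rw [← hunion, Finset.sum_union (Finset.disjoint_union_left.mpr ⟨hd13, hd23⟩),
      Finset.sum_union hd12]
  have hsplitR : ∀ f : (Fin (2 * n) → ℝ) → ℝ,
      ∑ u ∈ S, f u = ∑ u ∈ V1, f u + ∑ u ∈ V2, f u + ∑ u ∈ V3, f u := by
    intro f
    rw [← hunion, Finset.sum_union (Finset.disjoint_union_left.mpr ⟨hd13, hd23⟩),
      Finset.sum_union hd12]
  set ι := {x : (Fin (2 * n) → ℝ) // x ∈ S} with hι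
  set L : (ι → ℝ) →ₗ[ℝ] (Fin (2 * n) → ℝ) := Fintype.linearCombination ℝ (fun i : ι => (i : (Fin (2 * n) → ℝ))) with hL
  set R1 : (Fin (2 * n) → ℝ) → ℝ := fun u => if u ∈ V1 then 1 else if u ∈ V2 then -1 else 0 with hR1
  set R2 : (Fin (2 * n) → ℝ) → ℝ := fun u => if u ∈ V2 then 1 else if u ∈ V3 then -1 else 0 with hR2
  set r1 : ι → ℝ := fun i => R1 i with hr1
  set r2 : ι → ℝ := fun i => R2 i with hr2
  have hLcomp : ∀ c : (Fin (2 * n) → ℝ) → ℝ, L (fun i : ι => c i) = ∑ u ∈ S, c u • u := by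
    intro c
    rw [hL, Fintype.linearCombination_apply]
    exact Finset.sum_coe_sort S (fun u => c u • u)
  have hR1_1 : ∀ u ∈ V1, R1 u = 1 := by intro u hu; simp [hR1, hu]
  have hR1_2 : ∀ u ∈ V2, R1 u = -1 := by
    intro u hu
    have : u ∉ V1 := fun h => (Finset.disjoint_left.1 hd12) h hu
    simp [hR1, hu, this]
  have hR1_3 : ∀ u ∈ V3, R1 u = 0 := by
    intro u hu
    have h1 : u ∉ V1 := fun h => (Finset.disjoint_left.1 hd13) h hu
    have h2 : u ∉ V2 := fun h => (Finset.disjoint_left.1 hd23) h hu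
    simp [hR1, h1, h2]
  have hR2_1 : ∀ u ∈ V1, R2 u = 0 := by
    intro u hu
    have h2 : u ∉ V2 := fun h => (Finset.disjoint_left.1 hd12) hu h
    have h3 : u ∉ V3 := fun h => (Finset.disjoint_left.1 hd13) hu h
    simp [hR2, h2, h3]
  have hR2_2 : ∀ u ∈ V2, R2 u = 1 := by intro u hu; simp [hR2, hu]
  have hR2_3 : ∀ u ∈ V3, R2 u = -1 := by
    intro u hu
    have : u ∉ V2 := fun h => (Finset.disjoint_left.1 hd23) h hu
    simp [hR2, hu, this]
  -- L r1 = 0 and L r2 = 0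
  have hLr1 : L r1 = 0 := by
    rw [hr1, hLcomp, hsplitE (fun u => R1 u • u)]
    have e1 : ∑ u ∈ V1, R1 u • u = ∑ u ∈ V1, u :=
      Finset.sum_congr rfl fun u hu => by rw [hR1_1 u hu, one_smul]
    have e2 : ∑ u ∈ V2, R1 u • u = -∑ u ∈ V2, u := by
      rw [← Finset.sum_neg_distrib]
      exact Finset.sum_congr rfl fun u hu => by rw [hR1_2 u hu, neg_smul, one_smul]
    have e3 : ∑ u ∈ V3, R1 u • u = 0 := by
      refine Finset.sum_eq_zero fun u hu => by rw [hR1_3 u hu, zero_smul]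
    rw [e1, e2, e3, hsum1, hsum2, add_zero, add_neg_cancel]
  have hLr2 : L r2 = 0 := by
    rw [hr2, hLcomp, hsplitE (fun u => R2 u • u)]
    have e1 : ∑ u ∈ V1, R2 u • u = 0 := by
      refine Finset.sum_eq_zero fun u hu => by rw [hR2_1 u hu, zero_smul]
    have e2 : ∑ u ∈ V2, R2 u • u = ∑ u ∈ V2, u :=
      Finset.sum_congr rfl fun u hu => by rw [hR2_2 u hu, one_smul]
    have e3 : ∑ u ∈ V3, R2 u • u = -∑ u ∈ V3, u := by
      rw [← Finset.sum_neg_distrib]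
      exact Finset.sum_congr rfl fun u hu => by rw [hR2_3 u hu, neg_smul, one_smul]
    rw [e1, e2, e3, hsum2, hsum3, zero_add, add_neg_cancel]
  -- finrank of kernel is 2
  have hcardι : Fintype.card ι = n + 2 := by
    show Fintype.card {x // x ∈ S} = n + 2
    rw [Fintype.card_coe, hScard]
  have hrange : LinearMap.range L = Submodule.span ℝ (S : Set (Fin (2 * n) → ℝ)) := by
    rw [hL, Fintype.range_linearCombination]
    congr 1
    exact Subtype.range_coe
  have hkerfr : Module.finrank ℝ (LinearMap.ker L) = 2 := by
    have h := LinearMap.finrank_range_add_finrank_ker L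
    rw [hrange, hspan, Module.finrank_pi, hcardι] at h
    omega
  -- r1, r2 are linearly independent
  obtain ⟨u2, hu2⟩ := hne2
  obtain ⟨u3, hu3⟩ := hne3
  have hli : LinearIndependent ℝ ![r1, r2] := by
    have hr1ne : r1 ≠ 0 := by
      intro h
      have := congrFun h ⟨u2, hsub2 hu2⟩
      rw [hr1] at this
      simp only [Pi.zero_apply] at this
      rw [hR1_2 u2 hu2] at this
      norm_num at this
    rw [LinearIndependent.pair_iff' hr1ne]
    intro a h
    have := congrFun h ⟨u3, hsub3 hu3⟩
    simp only [Pi.smul_apply, smul_eq_mul] at this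
    rw [hr1, hr2] at this
    simp only at this
    rw [hR2_3 u3 hu3, hR1_3 u3 hu3, mul_zero] at this
    norm_num at this
  have hPfr : Module.finrank ℝ (Submodule.span ℝ (Set.range ![r1, r2])) = 2 := by
    rw [finrank_span_eq_card hli, Fintype.card_fin]
  have hPle : Submodule.span ℝ (Set.range ![r1, r2]) ≤ LinearMap.ker L := by
    rw [Submodule.span_le, Set.range_subset_iff]
    intro i
    fin_cases i
    · simpa using hLr1
    · simpa using hLr2
  have hPK : Submodule.span ℝ (Set.range ![r1, r2]) = LinearMap.ker L :=
    Submodule.eq_of_le_of_finrank_eq hPle (by rw [hPfr, hkerfr])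
  -- sums of r1 and r2
  have hsumr1 : ∑ i : ι, r1 i = (V1.card : ℝ) - V2.card := by
    rw [hr1]
    rw [Finset.sum_coe_sort S R1, hsplitR R1]
    rw [Finset.sum_congr rfl hR1_1, Finset.sum_congr rfl hR1_2,
      Finset.sum_congr rfl hR1_3]
    simp [sub_eq_add_neg]
  have hsumr2 : ∑ i : ι, r2 i = 0 := by
    rw [hr2]
    rw [Finset.sum_coe_sort S R2, hsplitR R2]
    rw [Finset.sum_congr rfl hR2_1, Finset.sum_congr rfl hR2_2,
      Finset.sum_congr rfl hR2_3]
    simp [h23]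
  -- main argument
  intro v hv1 hvaff
  have hvS : v ∈ S := hsub1 hv1
  set T : Finset (Fin (2 * n) → ℝ) := S \ {v} with hT
  have hvrange : v ∈ affineSpan ℝ (Set.range (fun i : {x : (Fin (2 * n) → ℝ) // x ∈ T} => (i : (Fin (2 * n) → ℝ)))) := by
    have : Set.range (fun i : {x : (Fin (2 * n) → ℝ) // x ∈ T} => (i : (Fin (2 * n) → ℝ))) = (T : Set (Fin (2 * n) → ℝ)) := by
      rw [Subtype.range_coe_subtype]; ext x; simp
    rw [this]; exact hvaff
  obtain ⟨w, hw, hcomb⟩ := eq_affineCombination_of_mem_affineSpan_of_fintype hvrange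
  rw [Finset.affineCombination_eq_linear_combination _ _ _ hw] at hcomb
  set W : (Fin (2 * n) → ℝ) → ℝ := fun u => if h : u ∈ T then w ⟨u, h⟩ else 0 with hW
  have hWT : ∀ i : {x : (Fin (2 * n) → ℝ) // x ∈ T}, W (i : (Fin (2 * n) → ℝ)) = w i := by
    intro i; rw [hW]; simp
  have hWsum : ∑ u ∈ T, W u = 1 := by
    rw [← Finset.sum_coe_sort T W]
    rw [Finset.sum_congr rfl (fun i _ => hWT i)] at *
    · exact hw
  have hWcomb : ∑ u ∈ T, W u • u = v := by
    rw [← Finset.sum_coe_sort T (fun u => W u • u)]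
    rw [hcomb]
    exact Finset.sum_congr rfl (fun i _ => by rw [hWT i])
  set d : (Fin (2 * n) → ℝ) → ℝ := fun u => if u = v then 1 else -W u with hd
  have hdT : ∀ u ∈ T, d u = -W u := by
    intro u hu
    rw [hT, Finset.mem_sdiff, Finset.mem_singleton] at hu
    rw [hd]; simp [hu.2]
  have hdSsum : ∑ u ∈ S, d u • u = 0 := by
    rw [Finset.sum_eq_sum_sdiff_singleton_add hvS (fun u => d u • u)]
    have e1 : ∑ u ∈ S \ {v}, d u • u = -∑ u ∈ T, W u • u := by
      rw [← Finset.sum_neg_distrib]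
      exact Finset.sum_congr rfl fun u hu => by rw [hdT u hu, neg_smul]
    rw [e1, hWcomb]
    rw [hd]; simp
  have hdsum : ∑ u ∈ S, d u = 0 := by
    rw [Finset.sum_eq_sum_sdiff_singleton_add hvS d]
    have e1 : ∑ u ∈ S \ {v}, d u = -∑ u ∈ T, W u := by
      rw [← Finset.sum_neg_distrib]
      exact Finset.sum_congr rfl fun u hu => hdT u hu
    rw [e1, hWsum]
    rw [hd]; simp
  -- d restricted to ι lies in ker L = span of r1, r2
  have hmem : (fun i : ι => d i) ∈ LinearMap.ker L := by
    rw [LinearMap.mem_ker, hLcomp, hdSsum]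
  rw [← hPK, Submodule.mem_span_range_iff_exists_fun] at hmem
  obtain ⟨cf, hcf⟩ := hmem
  rw [Fin.sum_univ_two] at hcf
  simp only [Matrix.cons_val_zero, Matrix.cons_val_one, Matrix.head_cons] at hcf
  set a := cf 0
  set b := cf 1
  -- evaluate at v : a = 1
  have ha : a = 1 := by
    have := congrFun hcf ⟨v, hvS⟩
    simp only [Pi.add_apply, Pi.smul_apply, smul_eq_mul] at this
    rw [hr1, hr2] at this
    simp only at this
    rw [hR1_1 v hv1, hR2_1 v hv1, mul_one, mul_zero, add_zero] at this
    rw [hd] at this; simp at this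
    linarith
  -- sum over all coordinates
  have hsum : a * ((V1.card : ℝ) - V2.card) + b * 0 = 0 := by
    have h1 : ∑ i : ι, (a • r1 + b • r2) i = ∑ i : ι, d (i : (Fin (2 * n) → ℝ)) := by
      rw [hcf]
    have h2 : ∑ i : ι, d (i : (Fin (2 * n) → ℝ)) = 0 := by
      rw [Finset.sum_coe_sort S d]; exact hdsum
    simp only [Pi.add_apply, Pi.smul_apply, smul_eq_mul] at h1
    rw [Finset.sum_add_distrib, ← Finset.mul_sum, ← Finset.mul_sum, hsumr1, hsumr2] at h1
    rw [h1, h2]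
  rw [ha, mul_zero, add_zero, one_mul, sub_eq_zero] at hsum
  have : (V1.card : ℝ) < V2.card := by exact_mod_cast h12
  linarith
end

section
/- (Face characterization, case m₃ > m₂ = m₁ ≥ 2) Assume m₃ > m₂ = m₁ ≥ 2. Then for every nonempty subset F ⊆ S with F ≠ S, the convex hull of F is an extreme subset of the convex hull of S if and only if either (V₁ ⊄ F and V₂ ⊄ F) or V₁ ∪ V₂ ⊆ F. -/
open Finset Module

set_option linter.unusedSectionVars false
set_option maxHeartbeats 1000000

section Helpers

variable {E : Type*} [AddCommGroup E] [Module ℝ E] [DecidableEq E]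

private lemma sum_ite_subset {M : Type*} [AddCommMonoid M] {S T : Finset E} (hTS : T ⊆ S)
    (g : E → M) : ∑ v ∈ S, (if v ∈ T then g v else 0) = ∑ v ∈ T, g v := by
  rw [Finset.sum_ite_mem, Finset.inter_eq_right.mpr hTS]

private lemma mem_convexHull_finset {s : Finset E} {x : E} :
    x ∈ convexHull ℝ (s : Set E) ↔
      ∃ w : E → ℝ, (∀ y ∈ s, 0 ≤ w y) ∧ ∑ y ∈ s, w y = 1 ∧ ∑ y ∈ s, w y • y = x := by
  rw [Finset.convexHull_eq]
  constructor
  · rintro ⟨w, h0, h1, hx⟩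
    refine ⟨w, h0, h1, ?_⟩
    rwa [Finset.centerMass_eq_of_sum_1 _ _ h1] at hx
  · rintro ⟨w, h0, h1, hx⟩
    refine ⟨w, h0, h1, ?_⟩
    rwa [Finset.centerMass_eq_of_sum_1 _ _ h1]

private lemma dep_lemma {n : ℕ}
    (S V1 V2 V3 : Finset (Fin (2 * n) → ℝ))
    [DecidableEq (Fin (2 * n) → ℝ)]
    (hScard : S.card = n + 2)
    (hunion : V1 ∪ V2 ∪ V3 = S)
    (hd12 : Disjoint V1 V2) (hd13 : Disjoint V1 V3) (hd23 : Disjoint V2 V3)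
    (hne2 : V2.Nonempty) (hne3 : V3.Nonempty)
    (hsum1 : ∑ v ∈ V1, v = fun _ => (1 : ℝ))
    (hsum2 : ∑ v ∈ V2, v = fun _ => (1 : ℝ))
    (hsum3 : ∑ v ∈ V3, v = fun _ => (1 : ℝ))
    (hspan : Module.finrank ℝ (Submodule.span ℝ (S : Set (Fin (2 * n) → ℝ))) = n)
    (h12 : V1.card = V2.card) (h13 : V1.card ≠ V3.card)
    (c : (Fin (2 * n) → ℝ) → ℝ)
    (hc0 : ∑ v ∈ S, c v • v = 0)
    (hcs : ∑ v ∈ S, c v = 0) :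
    ∃ a : ℝ, ∀ v ∈ S, c v =
      a * ((if v ∈ V1 then (1:ℝ) else 0) - (if v ∈ V2 then (1:ℝ) else 0)) := by
  have hV1S : V1 ⊆ S := hunion ▸ (Finset.subset_union_left.trans Finset.subset_union_left)
  have hV2S : V2 ⊆ S := hunion ▸ (Finset.subset_union_right.trans Finset.subset_union_left)
  have hV3S : V3 ⊆ S := hunion ▸ Finset.subset_union_right
  -- weighted sums of ±1 indicator functions
  have key : ∀ (A B : Finset (Fin (2 * n) → ℝ)), A ⊆ S → B ⊆ S →
      ∑ v ∈ S, ((if v ∈ A then (1:ℝ) else 0) - (if v ∈ B then (1:ℝ) else 0)) • v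
        = (∑ v ∈ A, v) - (∑ v ∈ B, v) := by
    intro A B hA hB
    have h : ∀ v : Fin (2 * n) → ℝ,
        ((if v ∈ A then (1:ℝ) else 0) - (if v ∈ B then (1:ℝ) else 0)) • v
        = (if v ∈ A then v else 0) - (if v ∈ B then v else 0) := by
      intro v
      rw [sub_smul, ite_smul, ite_smul, one_smul, zero_smul]
    simp_rw [h]
    rw [Finset.sum_sub_distrib, sum_ite_subset hA, sum_ite_subset hB]
  have keyc : ∀ (A B : Finset (Fin (2 * n) → ℝ)), A ⊆ S → B ⊆ S →
      ∑ v ∈ S, ((if v ∈ A then (1:ℝ) else 0) - (if v ∈ B then (1:ℝ) else 0))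
        = (A.card : ℝ) - (B.card : ℝ) := by
    intro A B hA hB
    rw [Finset.sum_sub_distrib, sum_ite_subset hA, sum_ite_subset hB]
    simp
  set T := Fintype.linearCombination ℝ (fun i : {x // x ∈ S} => (i : Fin (2 * n) → ℝ)) with hT
  have hTapp : ∀ g : (Fin (2 * n) → ℝ) → ℝ,
      T (fun i => g ↑i) = ∑ v ∈ S, g v • v := by
    intro g
    rw [hT, Fintype.linearCombination_apply]
    exact Finset.sum_coe_sort S (fun v => g v • v)
  -- rank computation
  have hrange : LinearMap.range T = Submodule.span ℝ (S : Set (Fin (2 * n) → ℝ)) := by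
    rw [hT, Fintype.range_linearCombination]
    congr 1
    ext x
    simp [Subtype.range_coe_subtype]
  have hkerdim : finrank ℝ (LinearMap.ker T) = 2 := by
    have hrn := LinearMap.finrank_range_add_finrank_ker T
    rw [hrange, hspan, Module.finrank_fintype_fun_eq_card, Fintype.card_coe, hScard] at hrn
    omega
  -- the two dependencies
  set e1 : {x // x ∈ S} → ℝ :=
    fun i => (if (i : Fin (2 * n) → ℝ) ∈ V1 then (1:ℝ) else 0)
      - (if (i : Fin (2 * n) → ℝ) ∈ V2 then (1:ℝ) else 0) with he1
  set e2 : {x // x ∈ S} → ℝ :=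
    fun i => (if (i : Fin (2 * n) → ℝ) ∈ V1 then (1:ℝ) else 0)
      - (if (i : Fin (2 * n) → ℝ) ∈ V3 then (1:ℝ) else 0) with he2
  have he1ker : e1 ∈ LinearMap.ker T := by
    rw [LinearMap.mem_ker, he1]
    rw [hTapp (fun v => (if v ∈ V1 then (1:ℝ) else 0) - (if v ∈ V2 then (1:ℝ) else 0))]
    rw [key V1 V2 hV1S hV2S, hsum1, hsum2, sub_self]
  have he2ker : e2 ∈ LinearMap.ker T := by
    rw [LinearMap.mem_ker, he2]
    rw [hTapp (fun v => (if v ∈ V1 then (1:ℝ) else 0) - (if v ∈ V3 then (1:ℝ) else 0))]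
    rw [key V1 V3 hV1S hV3S, hsum1, hsum3, sub_self]
  -- e1, e2 are linearly independent
  obtain ⟨w2, hw2⟩ := hne2
  obtain ⟨w3, hw3⟩ := hne3
  have hw2n1 : w2 ∉ V1 := fun h => Finset.disjoint_left.mp hd12 h hw2
  have hw3n1 : w3 ∉ V1 := fun h => Finset.disjoint_left.mp hd13 h hw3
  have hw2n3 : w2 ∉ V3 := fun h => Finset.disjoint_left.mp hd23 hw2 h
  have hli : LinearIndependent ℝ ![e1, e2] := by
    rw [linearIndependent_fin2]
    constructor
    · intro h
      have := congrFun h ⟨w3, hV3S hw3⟩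
      simp only [he2, hw3n1, hw3, if_neg, if_pos, Matrix.cons_val_one, Matrix.head_cons] at this
      norm_num [hw3n1, hw3] at this
    · intro a h
      have := congrFun h ⟨w2, hV2S hw2⟩
      norm_num [he1, he2, hw2n1, hw2n3, hw2] at this
  -- span of e1 e2 equals the kernel
  have hWle : Submodule.span ℝ (Set.range ![e1, e2]) ≤ LinearMap.ker T := by
    rw [Submodule.span_le]
    rintro x ⟨i, rfl⟩
    fin_cases i
    · exact he1ker
    · exact he2ker
  have hWeq : Submodule.span ℝ (Set.range ![e1, e2]) = LinearMap.ker T := by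
    apply Submodule.eq_of_le_of_finrank_le hWle
    rw [hkerdim, finrank_span_eq_card hli, Fintype.card_fin]
  -- c restricted to S is in the kernel
  have hcker : (fun i : {x // x ∈ S} => c ↑i) ∈ LinearMap.ker T := by
    rw [LinearMap.mem_ker, hTapp c, hc0]
  rw [← hWeq, Submodule.mem_span_range_iff_exists_fun] at hcker
  obtain ⟨f, hf⟩ := hcker
  rw [Fin.sum_univ_two] at hf
  simp only [Matrix.cons_val_zero, Matrix.cons_val_one, Matrix.head_cons] at hf
  have hcv : ∀ v (hv : v ∈ S), c v =
      f 0 * ((if v ∈ V1 then (1:ℝ) else 0) - (if v ∈ V2 then (1:ℝ) else 0))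
      + f 1 * ((if v ∈ V1 then (1:ℝ) else 0) - (if v ∈ V3 then (1:ℝ) else 0)) := by
    intro v hv
    have := congrFun hf ⟨v, hv⟩
    simp only [Pi.add_apply, Pi.smul_apply, smul_eq_mul, he1, he2] at this
    linarith [this]
  -- coefficient sum forces f 1 = 0
  have hsumc : ∑ v ∈ S, c v
      = f 0 * ((V1.card : ℝ) - V2.card) + f 1 * ((V1.card : ℝ) - V3.card) := by
    rw [Finset.sum_congr rfl hcv, Finset.sum_add_distrib, ← Finset.mul_sum, ← Finset.mul_sum,
      keyc V1 V2 hV1S hV2S, keyc V1 V3 hV1S hV3S]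
  rw [hcs] at hsumc
  have h12' : (V1.card : ℝ) = V2.card := by exact_mod_cast h12
  have h13' : (V1.card : ℝ) ≠ V3.card := by exact_mod_cast h13
  have hf1 : f 1 = 0 := by
    rw [h12', sub_self, mul_zero, zero_add] at hsumc
    rcases mul_eq_zero.mp hsumc.symm with h | h
    · exact h
    · have h23' : (V2.card : ℝ) ≠ V3.card := by rw [← h12']; exact h13'
      exact absurd (sub_eq_zero.mp h) h23'
  refine ⟨f 0, fun v hv => ?_⟩
  rw [hcv v hv, hf1, zero_mul, add_zero]
private lemma vertex_lemma {n : ℕ}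
    (S V1 V2 V3 : Finset (Fin (2 * n) → ℝ))
    [DecidableEq (Fin (2 * n) → ℝ)]
    (hScard : S.card = n + 2)
    (hunion : V1 ∪ V2 ∪ V3 = S)
    (hd12 : Disjoint V1 V2) (hd13 : Disjoint V1 V3) (hd23 : Disjoint V2 V3)
    (hne2 : V2.Nonempty) (hne3 : V3.Nonempty)
    (hsum1 : ∑ v ∈ V1, v = fun _ => (1 : ℝ))
    (hsum2 : ∑ v ∈ V2, v = fun _ => (1 : ℝ))
    (hsum3 : ∑ v ∈ V3, v = fun _ => (1 : ℝ))
    (hspan : Module.finrank ℝ (Submodule.span ℝ (S : Set (Fin (2 * n) → ℝ))) = n)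
    (hm : 2 ≤ V1.card) (h12 : V1.card = V2.card) (h13 : V1.card ≠ V3.card)
    (F : Finset (Fin (2 * n) → ℝ)) (hFS : F ⊆ S)
    (w : Fin (2 * n) → ℝ) (hwS : w ∈ S)
    (hw : w ∈ convexHull ℝ (F : Set (Fin (2 * n) → ℝ))) :
    w ∈ F := by
  by_contra hwF
  obtain ⟨l, hl0, hl1, hlw⟩ := mem_convexHull_finset.mp hw
  set c : (Fin (2 * n) → ℝ) → ℝ :=
    fun v => (if v ∈ F then l v else 0) - (if v = w then 1 else 0) with hc
  have hsum_ite_w : ∀ (g : (Fin (2 * n) → ℝ) → (Fin (2 * n) → ℝ)),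
      True := fun _ => trivial
  have hc0 : ∑ v ∈ S, c v • v = 0 := by
    have h : ∀ v : Fin (2 * n) → ℝ, c v • v
        = (if v ∈ F then l v • v else 0) - (if v = w then v else 0) := by
      intro v
      rw [hc]
      rw [sub_smul, ite_smul, ite_smul, one_smul, zero_smul]
    simp_rw [h]
    rw [Finset.sum_sub_distrib, sum_ite_subset hFS, Finset.sum_ite_eq' S w (fun v => v),
      if_pos hwS, hlw, sub_self]
  have hcs : ∑ v ∈ S, c v = 0 := by
    rw [hc]
    rw [Finset.sum_sub_distrib, sum_ite_subset hFS, Finset.sum_ite_eq' S w (fun _ => (1:ℝ)),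
      if_pos hwS, hl1, sub_self]
  obtain ⟨a, ha⟩ := dep_lemma S V1 V2 V3 hScard hunion hd12 hd13 hd23 hne2 hne3
    hsum1 hsum2 hsum3 hspan h12 h13 c hc0 hcs
  have hcw : c w = -1 := by rw [hc]; simp [hwF]
  have hforbid : ∀ u ∈ S, u ≠ w → 0 ≤ c u := by
    intro u huS huw
    rw [hc]
    simp only [if_neg huw, sub_zero]
    split_ifs with h
    · exact hl0 u h
    · exact le_refl 0
  have hwmem : w ∈ V1 ∪ V2 ∪ V3 := hunion.symm ▸ hwS
  rw [Finset.mem_union, Finset.mem_union] at hwmem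
  rcases hwmem with (hw1 | hw2) | hw3
  · -- w ∈ V1 : a = -1, then another point of V1 gets coefficient -1
    have hwn2 : w ∉ V2 := fun h => Finset.disjoint_left.mp hd12 hw1 h
    have haw := ha w hwS
    rw [hcw, if_pos hw1, if_neg hwn2, sub_zero, mul_one] at haw
    obtain ⟨u, hu1, huw⟩ := Finset.exists_mem_ne (s := V1) (by omega) w
    have hun2 : u ∉ V2 := fun h => Finset.disjoint_left.mp hd12 hu1 h
    have hau := ha u (hunion ▸ (Finset.subset_union_left.trans Finset.subset_union_left) hu1)
    rw [if_pos hu1, if_neg hun2, sub_zero, mul_one, ← haw] at hau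
    have := hforbid u ((hunion ▸ (Finset.subset_union_left.trans Finset.subset_union_left)) hu1) huw
    rw [hau] at this
    linarith
  · -- w ∈ V2 : a = 1, then another point of V2 gets coefficient -1
    have hwn1 : w ∉ V1 := fun h => Finset.disjoint_left.mp hd12 h hw2
    have haw := ha w hwS
    rw [hcw, if_neg hwn1, if_pos hw2, zero_sub, mul_neg_one] at haw
    have hm2 : 2 ≤ V2.card := h12 ▸ hm
    obtain ⟨u, hu2, huw⟩ := Finset.exists_mem_ne (s := V2) (by omega) w
    have hun1 : u ∉ V1 := fun h => Finset.disjoint_left.mp hd12 h hu2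
    have huS : u ∈ S := (hunion ▸ (Finset.subset_union_right.trans Finset.subset_union_left)) hu2
    have hau := ha u huS
    rw [if_neg hun1, if_pos hu2, zero_sub, mul_neg_one] at hau
    have := hforbid u huS huw
    rw [hau] at this
    have haeq : a = 1 := by linarith
    rw [haeq] at this
    linarith
  · -- w ∈ V3 : coefficient of w must be 0, contradiction
    have hwn1 : w ∉ V1 := fun h => Finset.disjoint_left.mp hd13 h hw3
    have hwn2 : w ∉ V2 := fun h => Finset.disjoint_left.mp hd23 h hw3
    have haw := ha w hwS
    rw [hcw, if_neg hwn1, if_neg hwn2, sub_zero, mul_zero] at haw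
    linarith
private lemma forward_aux {S F A B : Finset E} (hFS : F ⊆ S) (hAS : A ⊆ S) (hBS : B ⊆ S)
    (hsB : ∑ v ∈ B, v = ∑ v ∈ A, v)
    (hcard : B.card = A.card) (hm : 2 ≤ A.card)
    (hvert : ∀ w ∈ S, w ∈ convexHull ℝ (F : Set E) → w ∈ F)
    (hext : IsExtreme ℝ (convexHull ℝ (S : Set E)) (convexHull ℝ (F : Set E)))
    (hA : A ⊆ F) : B ⊆ F := by
  intro w hwB
  apply hvert w (hBS hwB)
  set m := A.card with hmdef
  have hm0 : (0:ℝ) < m := by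
    have : 0 < m := by omega
    exact_mod_cast this
  have hm2 : (2:ℝ) ≤ m := by exact_mod_cast hm
  have hminv : (0:ℝ) < (m:ℝ)⁻¹ := by positivity
  have hm1pos : (0:ℝ) < (m:ℝ) - 1 := by linarith
  set p := (m:ℝ)⁻¹ • ∑ v ∈ A, v with hpdef
  have hp : p ∈ convexHull ℝ (F : Set E) := by
    apply mem_convexHull_finset.mpr
    refine ⟨fun v => if v ∈ A then (m:ℝ)⁻¹ else 0, ?_, ?_, ?_⟩
    · intro y _
      dsimp only
      split_ifs
      · exact le_of_lt hminv
      · exact le_refl 0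
    · rw [sum_ite_subset hA, Finset.sum_const, nsmul_eq_mul]
      field_simp
      rfl
    · have h : ∀ v : E, (if v ∈ A then (m:ℝ)⁻¹ else 0) • v
          = (if v ∈ A then (m:ℝ)⁻¹ • v else 0) := by
        intro v; rw [ite_smul, zero_smul]
      simp_rw [h]
      rw [sum_ite_subset hA, ← Finset.smul_sum]
  set q := ((m:ℝ) - 1)⁻¹ • ∑ v ∈ B.erase w, v with hqdef
  have herase : (B.erase w).card = m - 1 := by
    rw [Finset.card_erase_of_mem hwB, hcard]
  have hm1cast : ((m - 1 : ℕ) : ℝ) = (m:ℝ) - 1 := by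
    have h1 : 1 ≤ m := by omega
    push_cast [h1]
    ring
  have hBes : B.erase w ⊆ S := (Finset.erase_subset _ _).trans hBS
  have hq : q ∈ convexHull ℝ (S : Set E) := by
    apply mem_convexHull_finset.mpr
    refine ⟨fun v => if v ∈ B.erase w then ((m:ℝ)-1)⁻¹ else 0, ?_, ?_, ?_⟩
    · intro y _
      dsimp only
      split_ifs
      · positivity
      · exact le_refl 0
    · rw [sum_ite_subset hBes, Finset.sum_const, herase, nsmul_eq_mul, hm1cast]
      field_simp
    · have h : ∀ v : E, (if v ∈ B.erase w then ((m:ℝ)-1)⁻¹ else 0) • v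
          = (if v ∈ B.erase w then ((m:ℝ)-1)⁻¹ • v else 0) := by
        intro v; rw [ite_smul, zero_smul]
      simp_rw [h]
      rw [sum_ite_subset hBes, ← Finset.smul_sum]
  have hwS' : w ∈ convexHull ℝ (S : Set E) :=
    subset_convexHull ℝ _ (by exact_mod_cast hBS hwB)
  have hseg : p ∈ openSegment ℝ w q := by
    refine ⟨(m:ℝ)⁻¹, 1 - (m:ℝ)⁻¹, hminv, ?_, by ring, ?_⟩
    · have : (m:ℝ)⁻¹ < 1 := by
        rw [inv_lt_one_iff₀]
        right; linarith
      linarith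
    · have hsplit : w + ∑ v ∈ B.erase w, v = ∑ v ∈ B, v :=
        Finset.add_sum_erase B (fun v => v) hwB
      have hco : (1 - (m:ℝ)⁻¹) • q = (m:ℝ)⁻¹ • ∑ v ∈ B.erase w, v := by
        rw [hqdef, smul_smul]
        congr 1
        have hmne : (m:ℝ) ≠ 0 := ne_of_gt hm0
        have hm1ne : (m:ℝ) - 1 ≠ 0 := ne_of_gt hm1pos
        field_simp
      rw [hco, ← smul_add, hsplit, hsB, hpdef]
  exact hext.2 hwS' hq hp hseg

end Helpers

theorem stmt_13
    (n : ℕ) (hn : 0 < n)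
    (S V1 V2 V3 : Finset (Fin (2 * n) → ℝ))
    (h01 : ∀ v ∈ S, ∀ i, v i = 0 ∨ v i = 1)
    (hScard : S.card = n + 2)
    (hunion : V1 ∪ V2 ∪ V3 = S)
    (hd12 : Disjoint V1 V2) (hd13 : Disjoint V1 V3) (hd23 : Disjoint V2 V3)
    (hne1 : V1.Nonempty) (hne2 : V2.Nonempty) (hne3 : V3.Nonempty)
    (hsum1 : ∑ v ∈ V1, v = fun _ => (1 : ℝ))
    (hsum2 : ∑ v ∈ V2, v = fun _ => (1 : ℝ))
    (hsum3 : ∑ v ∈ V3, v = fun _ => (1 : ℝ))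
    (hspan : Module.finrank ℝ (Submodule.span ℝ (S : Set (Fin (2 * n) → ℝ))) = n)
    (hm : 2 ≤ V1.card) (h12 : V1.card = V2.card) (h23 : V2.card < V3.card)
    : ∀ F ⊆ S, F.Nonempty → F ≠ S →
      (IsExtreme ℝ (convexHull ℝ (S : Set (Fin (2 * n) → ℝ)))
          (convexHull ℝ (F : Set (Fin (2 * n) → ℝ))) ↔
        ((¬ V1 ⊆ F ∧ ¬ V2 ⊆ F) ∨ V1 ∪ V2 ⊆ F)) := by
  classical
  intro F hFS hFne hFneS
  have h13 : V1.card ≠ V3.card := by omega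
  have hV1S : V1 ⊆ S := hunion ▸ (Finset.subset_union_left.trans Finset.subset_union_left)
  have hV2S : V2 ⊆ S := hunion ▸ (Finset.subset_union_right.trans Finset.subset_union_left)
  have hV3S : V3 ⊆ S := hunion ▸ Finset.subset_union_right
  have hvert : ∀ w ∈ S, w ∈ convexHull ℝ (F : Set (Fin (2 * n) → ℝ)) → w ∈ F :=
    fun w hw hconv => vertex_lemma S V1 V2 V3 hScard hunion hd12 hd13 hd23 hne2 hne3
      hsum1 hsum2 hsum3 hspan hm h12 h13 F hFS w hw hconv
  constructor
  · intro hext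
    by_cases h1 : V1 ⊆ F
    · right
      exact Finset.union_subset h1
        (forward_aux hFS hV1S hV2S (hsum2.trans hsum1.symm) h12.symm hm hvert hext h1)
    · left
      refine ⟨h1, fun h2 => h1 ?_⟩
      exact forward_aux hFS hV2S hV1S (hsum1.trans hsum2.symm) h12 (h12 ▸ hm) hvert hext h2
  · intro hcond
    constructor
    · exact convexHull_mono (by exact_mod_cast hFS)
    · intro x1 hx1 x2 hx2 p hp hseg
      obtain ⟨α, hα0, hα1, hαx⟩ := mem_convexHull_finset.mp hx1
      obtain ⟨β, hβ0, hβ1, hβx⟩ := mem_convexHull_finset.mp hx2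
      obtain ⟨l, hl0, hl1, hlp⟩ := mem_convexHull_finset.mp hp
      obtain ⟨t, s', ht, hs', hts, heq⟩ := hseg
      set γ : (Fin (2 * n) → ℝ) → ℝ := fun v => t * α v + s' * β v with hγ
      have hγ0 : ∀ v ∈ S, 0 ≤ γ v := by
        intro v hv
        have := hα0 v hv
        have := hβ0 v hv
        rw [hγ]
        dsimp only
        nlinarith
      have hγ1 : ∑ v ∈ S, γ v = 1 := by
        rw [hγ]
        rw [Finset.sum_add_distrib, ← Finset.mul_sum, ← Finset.mul_sum, hα1, hβ1]
        linarith
      have hγp : ∑ v ∈ S, γ v • v = p := by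
        have h : ∀ v : Fin (2 * n) → ℝ, γ v • v = t • (α v • v) + s' • (β v • v) := by
          intro v
          rw [hγ]
          dsimp only
          rw [add_smul, mul_smul, mul_smul]
        simp_rw [h]
        rw [Finset.sum_add_distrib, ← Finset.smul_sum, ← Finset.smul_sum, hαx, hβx, heq]
      set c : (Fin (2 * n) → ℝ) → ℝ := fun v => (if v ∈ F then l v else 0) - γ v with hc
      have hc0 : ∑ v ∈ S, c v • v = 0 := by
        have h : ∀ v : Fin (2 * n) → ℝ, c v • v
            = (if v ∈ F then l v • v else 0) - γ v • v := by
          intro v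
          rw [hc]
          dsimp only
          rw [sub_smul, ite_smul, zero_smul]
        simp_rw [h]
        rw [Finset.sum_sub_distrib, sum_ite_subset hFS, hlp, hγp, sub_self]
      have hcs : ∑ v ∈ S, c v = 0 := by
        rw [hc]
        rw [Finset.sum_sub_distrib, sum_ite_subset hFS, hl1, hγ1, sub_self]
      obtain ⟨a, ha⟩ := dep_lemma S V1 V2 V3 hScard hunion hd12 hd13 hd23 hne2 hne3
        hsum1 hsum2 hsum3 hspan h12 h13 c hc0 hcs
      -- if some coefficient of the dependency is 'active', then V1 ∪ V2 ⊆ F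
      have hsupp : ∀ v ∈ S, v ∉ F → γ v = 0 := by
        have hVF : a ≠ 0 → V1 ∪ V2 ⊆ F := by
          intro hane
          have h1orh2 : V1 ⊆ F ∨ V2 ⊆ F := by
            rcases lt_trichotomy a 0 with hneg | hzero | hpos
            · right
              intro u hu
              by_contra huF
              have huS := hV2S hu
              have hun1 : u ∉ V1 := fun h => Finset.disjoint_left.mp hd12 h hu
              have hau := ha u huS
              rw [if_neg hun1, if_pos hu, zero_sub, mul_neg_one] at hau
              have hcu : c u = 0 - γ u := by rw [hc]; dsimp only; rw [if_neg huF]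
              have := hγ0 u huS
              rw [hcu] at hau
              linarith
            · exact absurd hzero hane
            · left
              intro u hu
              by_contra huF
              have huS := hV1S hu
              have hun2 : u ∉ V2 := fun h => Finset.disjoint_left.mp hd12 hu h
              have hau := ha u huS
              rw [if_pos hu, if_neg hun2, sub_zero, mul_one] at hau
              have hcu : c u = 0 - γ u := by rw [hc]; dsimp only; rw [if_neg huF]
              have := hγ0 u huS
              rw [hcu] at hau
              linarith
          rcases hcond with ⟨hn1, hn2⟩ | hVF'
          · rcases h1orh2 with h | h
            · exact absurd h hn1
            · exact absurd h hn2
          · exact hVF'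
        intro v hvS hvF
        by_cases hane : a = 0
        · have hav := ha v hvS
          rw [hane, zero_mul] at hav
          have hcv : c v = 0 - γ v := by rw [hc]; dsimp only; rw [if_neg hvF]
          rw [hcv] at hav
          linarith
        · have hVF' := hVF hane
          have hvn1 : v ∉ V1 := fun h => hvF (hVF' (Finset.mem_union_left _ h))
          have hvn2 : v ∉ V2 := fun h => hvF (hVF' (Finset.mem_union_right _ h))
          have hav := ha v hvS
          rw [if_neg hvn1, if_neg hvn2, sub_zero, mul_zero] at hav
          have hcv : c v = 0 - γ v := by rw [hc]; dsimp only; rw [if_neg hvF]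
          rw [hcv] at hav
          linarith
      have hzero : ∀ v ∈ S, v ∉ F → α v = 0 ∧ β v = 0 := by
        intro v hv hvF
        have h0 := hsupp v hv hvF
        have hα' := hα0 v hv
        have hβ' := hβ0 v hv
        have hγv : t * α v + s' * β v = 0 := h0
        constructor <;> nlinarith
      refine And.left (b := x2 ∈ convexHull ℝ (F : Set (Fin (2 * n) → ℝ))) ⟨?_, ?_⟩
      · apply mem_convexHull_finset.mpr
        refine ⟨α, fun y hy => hα0 y (hFS hy), ?_, ?_⟩
        · rw [Finset.sum_subset hFS (fun v hv hvF => (hzero v hv hvF).1)]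
          exact hα1
        · rw [Finset.sum_subset hFS (fun v hv hvF => by
            rw [(hzero v hv hvF).1, zero_smul])]
          exact hαx
      · apply mem_convexHull_finset.mpr
        refine ⟨β, fun y hy => hβ0 y (hFS hy), ?_, ?_⟩
        · rw [Finset.sum_subset hFS (fun v hv hvF => (hzero v hv hvF).2)]
          exact hβ1
        · rw [Finset.sum_subset hFS (fun v hv hvF => by
            rw [(hzero v hv hvF).2, zero_smul])]
          exact hβx
end

section
/- (Pyramid structure, case m₃ > m₂ = m₁ ≥ 2) Assume m₃ > m₂ = m₁ ≥ 2. Then for every v ∈ V₃, the point v does not belong to the affine span of S ∖ {v}; hence conv(S) is an m₃-fold pyramid whose apexes are the points of V₃. -/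
private lemma sum_split14 {α M : Type*} [DecidableEq α] [AddCommMonoid M] {V1 V2 V3 S : Finset α}
    (hunion : V1 ∪ V2 ∪ V3 = S) (hd12 : Disjoint V1 V2) (hd13 : Disjoint V1 V3)
    (hd23 : Disjoint V2 V3) (f : α → M) :
    ∑ x ∈ S, f x = ∑ x ∈ V1, f x + ∑ x ∈ V2, f x + ∑ x ∈ V3, f x := by
  rw [← hunion, Finset.sum_union (Finset.disjoint_union_left.mpr ⟨hd13, hd23⟩),
    Finset.sum_union hd12]

theorem stmt_14
    (n : ℕ) (hn : 0 < n)
    (S V1 V2 V3 : Finset (Fin (2 * n) → ℝ))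
    (h01 : ∀ v ∈ S, ∀ i, v i = 0 ∨ v i = 1)
    (hScard : S.card = n + 2)
    (hunion : V1 ∪ V2 ∪ V3 = S)
    (hd12 : Disjoint V1 V2) (hd13 : Disjoint V1 V3) (hd23 : Disjoint V2 V3)
    (hne1 : V1.Nonempty) (hne2 : V2.Nonempty) (hne3 : V3.Nonempty)
    (hsum1 : ∑ v ∈ V1, v = fun _ => (1 : ℝ))
    (hsum2 : ∑ v ∈ V2, v = fun _ => (1 : ℝ))
    (hsum3 : ∑ v ∈ V3, v = fun _ => (1 : ℝ))
    (hspan : Module.finrank ℝ (Submodule.span ℝ (S : Set (Fin (2 * n) → ℝ))) = n)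
    (hm : 2 ≤ V1.card) (h12 : V1.card = V2.card) (h23 : V2.card < V3.card)
    : ∀ v ∈ V3, v ∉ affineSpan ℝ ((S \ {v} : Finset (Fin (2 * n) → ℝ)) : Set (Fin (2 * n) → ℝ)) := by
  classical
  intro v hv3 hvin
  have hV1S : V1 ⊆ S := by
    rw [← hunion]; exact (Finset.subset_union_left).trans Finset.subset_union_left
  have hV2S : V2 ⊆ S := by
    rw [← hunion]; exact (Finset.subset_union_right).trans Finset.subset_union_left
  have hV3S : V3 ⊆ S := by rw [← hunion]; exact Finset.subset_union_right
  have hvS : v ∈ S := hV3S hv3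
  -- weight functions for the two basic relations
  set r1' : (Fin (2 * n) → ℝ) → ℝ :=
    fun x => if x ∈ V1 then 1 else if x ∈ V2 then -1 else 0 with hr1'
  set r2' : (Fin (2 * n) → ℝ) → ℝ :=
    fun x => if x ∈ V2 then 1 else if x ∈ V3 then -1 else 0 with hr2'
  have hr1V1 : ∀ x ∈ V1, r1' x = 1 := fun x hx => if_pos hx
  have hr1V2 : ∀ x ∈ V2, r1' x = -1 := fun x hx => by
    simp only [hr1', if_neg (Finset.disjoint_right.mp hd12 hx), if_pos hx]
  have hr1V3 : ∀ x ∈ V3, r1' x = 0 := fun x hx => by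
    simp only [hr1', if_neg (Finset.disjoint_right.mp hd13 hx),
      if_neg (Finset.disjoint_right.mp hd23 hx)]
  have hr2V1 : ∀ x ∈ V1, r2' x = 0 := fun x hx => by
    simp only [hr2', if_neg (Finset.disjoint_left.mp hd12 hx),
      if_neg (Finset.disjoint_left.mp hd13 hx)]
  have hr2V2 : ∀ x ∈ V2, r2' x = 1 := fun x hx => if_pos hx
  have hr2V3 : ∀ x ∈ V3, r2' x = -1 := fun x hx => by
    simp only [hr2', if_neg (Finset.disjoint_right.mp hd23 hx), if_pos hx]
  set r1 : ↥S → ℝ := fun i => r1' ↑i with hr1def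
  set r2 : ↥S → ℝ := fun i => r2' ↑i with hr2def
  set φ := (Fintype.linearCombination ℝ (fun i : ↥S => (i : Fin (2 * n) → ℝ))) with hφ
  have hφapp : ∀ g : (Fin (2 * n) → ℝ) → ℝ,
      φ (fun i : ↥S => g ↑i) = ∑ x ∈ S, g x • x := by
    intro g
    rw [hφ, Fintype.linearCombination_apply]
    exact Finset.sum_coe_sort S (fun x => g x • x)
  have hsumapp : ∀ g : (Fin (2 * n) → ℝ) → ℝ,
      ∑ i : ↥S, g ↑i = ∑ x ∈ S, g x := fun g => Finset.sum_coe_sort S g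
  -- the split of sums
  have hsplit := fun {M : Type} [AddCommMonoid M] (f : (Fin (2 * n) → ℝ) → M) =>
    sum_split14 hunion hd12 hd13 hd23 f
  -- r1 and r2 are in the kernel
  have hφr1 : φ r1 = 0 := by
    rw [hr1def, hφapp, hsplit]
    have e1 : ∑ x ∈ V1, r1' x • x = ∑ x ∈ V1, x :=
      Finset.sum_congr rfl fun x hx => by rw [hr1V1 x hx, one_smul]
    have e2 : ∑ x ∈ V2, r1' x • x = -∑ x ∈ V2, x := by
      rw [← Finset.sum_neg_distrib]
      exact Finset.sum_congr rfl fun x hx => by rw [hr1V2 x hx, neg_one_smul]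
    have e3 : ∑ x ∈ V3, r1' x • x = 0 :=
      Finset.sum_eq_zero fun x hx => by rw [hr1V3 x hx, zero_smul]
    rw [e1, e2, e3, hsum1, hsum2]
    simp
  have hφr2 : φ r2 = 0 := by
    rw [hr2def, hφapp, hsplit]
    have e1 : ∑ x ∈ V1, r2' x • x = 0 :=
      Finset.sum_eq_zero fun x hx => by rw [hr2V1 x hx, zero_smul]
    have e2 : ∑ x ∈ V2, r2' x • x = ∑ x ∈ V2, x :=
      Finset.sum_congr rfl fun x hx => by rw [hr2V2 x hx, one_smul]
    have e3 : ∑ x ∈ V3, r2' x • x = -∑ x ∈ V3, x := by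
      rw [← Finset.sum_neg_distrib]
      exact Finset.sum_congr rfl fun x hx => by rw [hr2V3 x hx, neg_one_smul]
    rw [e1, e2, e3, hsum2, hsum3]
    simp
  -- coefficient sums
  have hsigr1 : ∑ i : ↥S, r1 i = 0 := by
    rw [hr1def, hsumapp, hsplit]
    have e1 : ∑ x ∈ V1, r1' x = V1.card := by
      rw [Finset.sum_congr rfl hr1V1]; simp
    have e2 : ∑ x ∈ V2, r1' x = -V2.card := by
      rw [Finset.sum_congr rfl hr1V2]; simp
    have e3 : ∑ x ∈ V3, r1' x = 0 := Finset.sum_eq_zero hr1V3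
    rw [e1, e2, e3, h12]
    simp
  have hsigr2 : ∑ i : ↥S, r2 i = (V2.card : ℝ) - V3.card := by
    rw [hr2def, hsumapp, hsplit]
    have e1 : ∑ x ∈ V1, r2' x = 0 := Finset.sum_eq_zero hr2V1
    have e2 : ∑ x ∈ V2, r2' x = V2.card := by
      rw [Finset.sum_congr rfl hr2V2]; simp
    have e3 : ∑ x ∈ V3, r2' x = -V3.card := by
      rw [Finset.sum_congr rfl hr2V3]; simp
    rw [e1, e2, e3]
    ring
  -- dimension of the kernel
  have hrange : LinearMap.range φ = Submodule.span ℝ (S : Set (Fin (2 * n) → ℝ)) := by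
    rw [hφ, Fintype.range_linearCombination]
    congr 1
    exact Subtype.range_coe
  have hker : Module.finrank ℝ (LinearMap.ker φ) = 2 := by
    have h1 := LinearMap.finrank_range_add_finrank_ker φ
    rw [hrange, hspan, Module.finrank_pi, Fintype.card_coe, hScard] at h1
    omega
  -- linear independence of r1, r2
  have hli : LinearIndependent ℝ ![r1, r2] := by
    rw [LinearIndependent.pair_iff]
    intro s t hst
    obtain ⟨u1, hu1⟩ := hne1
    obtain ⟨u3, hu3⟩ := hne3
    constructor
    · have := congrFun hst ⟨u1, hV1S hu1⟩
      simpa [hr1def, hr2def, hr1V1 u1 hu1, hr2V1 u1 hu1] using this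
    · have := congrFun hst ⟨u3, hV3S hu3⟩
      have h0 := hr1V3 u3 hu3
      have h1 := hr2V3 u3 hu3
      simp only [Pi.add_apply, Pi.smul_apply, hr1def, hr2def, h0, h1, smul_eq_mul,
        mul_zero, zero_add, mul_neg_one, Pi.zero_apply] at this
      linarith
  -- span {r1, r2} = ker φ
  have hsple : Submodule.span ℝ {r1, r2} ≤ LinearMap.ker φ := by
    rw [Submodule.span_le]
    rintro x (rfl | rfl)
    · exact LinearMap.mem_ker.mpr hφr1
    · exact LinearMap.mem_ker.mpr hφr2
  have hrangeset : Set.range ![r1, r2] = {r1, r2} := by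
    ext x
    simp [Fin.exists_fin_two, eq_comm, or_comm]
  have hsp : Submodule.span ℝ {r1, r2} = LinearMap.ker φ := by
    apply Submodule.eq_of_le_of_finrank_le hsple
    rw [hker]
    have := finrank_span_eq_card hli
    rw [hrangeset] at this
    rw [this]
    simp
  -- build the affine relation
  set T : Finset (Fin (2 * n) → ℝ) := S \ {v} with hT
  have hrt : Set.range (fun i : ↥T => (i : Fin (2 * n) → ℝ)) = (T : Set (Fin (2 * n) → ℝ)) := by
    rw [Subtype.range_coe_subtype]
    exact Finset.setOf_mem
  obtain ⟨w, hw1, hweq⟩ :=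
    eq_affineCombination_of_mem_affineSpan_of_fintype (by rwa [hrt] : v ∈ affineSpan ℝ
      (Set.range (fun i : ↥T => (i : Fin (2 * n) → ℝ))))
  rw [Finset.univ.affineCombination_eq_linear_combination _ _ hw1] at hweq
  set W : (Fin (2 * n) → ℝ) → ℝ := fun x => if h : x ∈ T then w ⟨x, h⟩ else 0 with hWdef
  have hWT : ∀ i : ↥T, W ↑i = w i := fun i => by
    rw [hWdef]; simp only [i.2, dif_pos]
  have hWsum : ∑ x ∈ T, W x • x = v := by
    rw [← Finset.sum_coe_sort T (fun x => W x • x)]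
    rw [hweq]
    exact Finset.sum_congr rfl (fun i _ => by rw [hWT i])
  have hW1 : ∑ x ∈ T, W x = 1 := by
    rw [← Finset.sum_coe_sort T W]
    rw [← hw1]
    exact Finset.sum_congr rfl (fun i _ => hWT i)
  have hvT : v ∉ T := by simp [hT]
  have hST : S = insert v T := by
    rw [hT, Finset.sdiff_singleton_eq_erase, Finset.insert_erase hvS]
  set c' : (Fin (2 * n) → ℝ) → ℝ := fun x => if x = v then 1 else -W x with hc'
  set c : ↥S → ℝ := fun i => c' ↑i with hcdef
  have hc'T : ∀ x ∈ T, c' x = -W x := fun x hx => by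
    rw [hc']
    simp only [if_neg (by rintro rfl; exact hvT hx : x ≠ v)]
  have hφc : φ c = 0 := by
    rw [hcdef, hφapp]
    rw [hST, Finset.sum_insert hvT]
    rw [Finset.sum_congr rfl (fun x hx => by rw [hc'T x hx, neg_smul])]
    rw [Finset.sum_neg_distrib, hWsum]
    simp [hc']
  have hsigc : ∑ i : ↥S, c i = 0 := by
    rw [hcdef, hsumapp]
    rw [hST, Finset.sum_insert hvT]
    rw [Finset.sum_congr rfl hc'T, Finset.sum_neg_distrib, hW1]
    simp [hc']
  -- c ∈ span {r1, r2}
  have hcsp : c ∈ Submodule.span ℝ {r1, r2} := by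
    rw [hsp]; exact LinearMap.mem_ker.mpr hφc
  obtain ⟨a, b, hab⟩ := Submodule.mem_span_pair.mp hcsp
  -- evaluate at v
  have hb1 : b = -1 := by
    have := congrFun hab ⟨v, hvS⟩
    have e1 : r1' v = 0 := hr1V3 v hv3
    have e2 : r2' v = -1 := hr2V3 v hv3
    have e3 : c' v = 1 := if_pos rfl
    simp only [Pi.add_apply, Pi.smul_apply, hr1def, hr2def, hcdef, e1, e2, e3,
      smul_eq_mul, mul_zero, zero_add, mul_neg_one] at this
    linarith
  -- sum the relation
  have hb0 : b = 0 := by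
    have hsum := congrArg (fun f : ↥S → ℝ => ∑ i : ↥S, f i) hab
    simp only [Pi.add_apply, Pi.smul_apply, smul_eq_mul, Finset.sum_add_distrib,
      ← Finset.mul_sum] at hsum
    rw [hsigr1, hsigr2, hsigc, mul_zero, zero_add] at hsum
    have hne : (V2.card : ℝ) - V3.card ≠ 0 := by
      have : (V2.card : ℝ) < V3.card := by exact_mod_cast h23
      linarith
    exact (mul_eq_zero.mp hsum).resolve_right hne
  rw [hb0] at hb1
  norm_num at hb1
end

section
/- (Face characterization, case m₁ = m₂ = m₃ ≥ 2) Assume m₁ = m₂ = m₃ ≥ 2. Then for every nonempty subset F ⊆ S, the convex hull of F is an extreme subset of the convex hull of S with F ≠ S if and only if V₁ ⊄ F, V₂ ⊄ F and V₃ ⊄ F. -/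
open Finset

variable {E : Type*} [AddCommGroup E] [Module ℝ E]

lemma hull_le' (φ : E →ₗ[ℝ] ℝ) (F : Finset E) (c : ℝ) (h : ∀ v ∈ F, φ v ≤ c) :
    ∀ x ∈ convexHull ℝ (F : Set E), φ x ≤ c := fun _ hx =>
  convexHull_min (fun v hv => h v hv) (convex_halfSpace_le φ.isLinear c) hx

lemma hull_eq' (φ : E →ₗ[ℝ] ℝ) (F : Finset E) (h : ∀ v ∈ F, φ v = 0) :
    ∀ x ∈ convexHull ℝ (F : Set E), φ x = 0 := fun _ hx =>
  convexHull_min (fun v hv => h v hv) (convex_hyperplane φ.isLinear 0) hx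

lemma mem_hull_of_zero (φ : E →ₗ[ℝ] ℝ) (S F : Finset E) (hFS : F ⊆ S)
    (hle : ∀ v ∈ S, φ v ≤ 0) (hmem : ∀ v ∈ S, φ v = 0 → v ∈ F) :
    ∀ x ∈ convexHull ℝ (S : Set E), φ x = 0 → x ∈ convexHull ℝ (F : Set E) := by
  intro x hx hx0
  rw [Finset.convexHull_eq] at hx
  obtain ⟨w, hw0, hw1, hxc⟩ := hx
  rw [Finset.centerMass_eq_of_sum_1 _ _ hw1] at hxc
  have hφ : ∑ y ∈ S, w y * φ y = 0 := by
    rw [← hx0, ← hxc]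
    simp [map_sum, smul_eq_mul]
  have hzero : ∀ y ∈ S, w y * φ y = 0 := by
    exact (Finset.sum_eq_zero_iff_of_nonpos
      (fun y hy => mul_nonpos_of_nonneg_of_nonpos (hw0 y hy) (hle y hy))).1 hφ
  have hw0' : ∀ y ∈ S, y ∉ F → w y = 0 := by
    intro y hy hyF
    have hφy : φ y ≠ 0 := fun h => hyF (hmem y hy h)
    have := hzero y hy
    rcases mul_eq_zero.1 this with h | h
    · exact h
    · exact absurd h hφy
  have hsumF : ∑ y ∈ F, w y = 1 := by
    rw [← hw1]
    exact Finset.sum_subset hFS (fun y hyS hyF => hw0' y hyS hyF)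
  rw [Finset.convexHull_eq]
  refine ⟨w, fun y hy => hw0 y (hFS hy), hsumF, ?_⟩
  rw [Finset.centerMass_eq_of_sum_1 _ _ hsumF, ← hxc]
  exact Finset.sum_subset hFS (fun y hyS hyF => by rw [hw0' y hyS hyF, zero_smul])

lemma face_lemma (φ : E →ₗ[ℝ] ℝ) (S F : Finset E) (hFS : F ⊆ S)
    (hle : ∀ v ∈ S, φ v ≤ 0) (hF0 : ∀ v ∈ F, φ v = 0)
    (hmem : ∀ v ∈ S, φ v = 0 → v ∈ F) :
    IsExtreme ℝ (convexHull ℝ (S : Set E)) (convexHull ℝ (F : Set E)) := by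
  constructor
  · exact convexHull_mono (by exact_mod_cast hFS)
  · intro x1 hx1 x2 hx2 p hpB hseg
    obtain ⟨a, b, ha, hb, hab, hsum⟩ := hseg
    have hp0 : φ p = 0 := hull_eq' φ F hF0 p hpB
    have h1 : φ x1 ≤ 0 := hull_le' φ S 0 hle x1 hx1
    have h2 : φ x2 ≤ 0 := hull_le' φ S 0 hle x2 hx2
    have heq : a * φ x1 + b * φ x2 = 0 := by
      rw [← hp0, ← hsum]; simp [smul_eq_mul]
    have e1 : φ x1 = 0 := by nlinarith
    have e2 : φ x2 = 0 := by nlinarith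
    exact mem_hull_of_zero φ S F hFS hle hmem x1 hx1 e1


open Finset Module

-- reindexing lemma
lemma sum_attach_ite {E : Type*} [DecidableEq E] (S T : Finset E) (hTS : T ⊆ S) (f : E → ℝ) :
    ∑ v ∈ S.attach, (if (v : E) ∈ T then f ↑v else 0) = ∑ v ∈ T, f v := by
  rw [Finset.sum_attach S (fun v => if v ∈ T then f v else 0), Finset.sum_ite_mem,
    Finset.inter_eq_right.mpr hTS]

noncomputable def classSum {E : Type*} [DecidableEq E] (S T : Finset E) :
    ((↥S → ℝ)) →ₗ[ℝ] ℝ where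
  toFun h := ∑ v ∈ S.attach, (if (v : E) ∈ T then h v else 0)
  map_add' h h' := by
    rw [← Finset.sum_add_distrib]
    exact Finset.sum_congr rfl (fun v _ => by by_cases hv : (v : E) ∈ T <;> simp [hv])
  map_smul' c h := by
    simp only [RingHom.id_apply, smul_eq_mul, Finset.mul_sum]
    exact Finset.sum_congr rfl (fun v _ => by by_cases hv : (v : E) ∈ T <;> simp [hv])

lemma ext_lemma (n : ℕ) (S V1 V2 V3 : Finset (Fin (2 * n) → ℝ))
    (hScard : S.card = n + 2)
    (hunion : V1 ∪ V2 ∪ V3 = S)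
    (hd12 : Disjoint V1 V2) (hd13 : Disjoint V1 V3) (hd23 : Disjoint V2 V3)
    (hne1 : V1.Nonempty) (hne3 : V3.Nonempty)
    (hsum1 : ∑ v ∈ V1, v = fun _ => (1 : ℝ))
    (hsum2 : ∑ v ∈ V2, v = fun _ => (1 : ℝ))
    (hsum3 : ∑ v ∈ V3, v = fun _ => (1 : ℝ))
    (hspan : Module.finrank ℝ (Submodule.span ℝ (S : Set (Fin (2 * n) → ℝ))) = n)
    (g : (Fin (2 * n) → ℝ) → ℝ)
    (hg12 : ∑ v ∈ V1, g v = ∑ v ∈ V2, g v)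
    (hg23 : ∑ v ∈ V2, g v = ∑ v ∈ V3, g v) :
    ∃ φ : (Fin (2 * n) → ℝ) →ₗ[ℝ] ℝ, ∀ v ∈ S, φ v = g v := by
  classical
  let E := Fin (2 * n) → ℝ
  have hV1S : V1 ⊆ S := hunion ▸ (Finset.subset_union_left.trans Finset.subset_union_left)
  have hV2S : V2 ⊆ S := hunion ▸ (Finset.subset_union_right.trans Finset.subset_union_left)
  have hV3S : V3 ⊆ S := hunion ▸ Finset.subset_union_right
  -- the matrix of S
  set A : Matrix ↥S (Fin (2 * n)) ℝ := fun s i => (s : E) i with hA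
  set L : E →ₗ[ℝ] (↥S → ℝ) := A.mulVecLin with hL
  -- rank of A is n
  have hrank : A.rank = n := by
    rw [← Matrix.rank_transpose, Matrix.rank, Matrix.range_mulVecLin]
    change finrank ℝ (Submodule.span ℝ (Set.range A)) = n
    have : Set.range A = (S : Set E) := by
      ext x
      constructor
      · rintro ⟨s, rfl⟩; exact s.2
      · intro hx; exact ⟨⟨x, hx⟩, rfl⟩
    rw [this, hspan]
  -- the constraint map
  set ψ : (↥S → ℝ) →ₗ[ℝ] ℝ × ℝ :=
    LinearMap.prod (classSum S V1 - classSum S V2) (classSum S V2 - classSum S V3) with hψ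
  -- ψ is surjective
  have hsurj : Function.Surjective ψ := by
    obtain ⟨a, ha⟩ := hne1
    obtain ⟨b, hb⟩ := hne3
    have haS : a ∈ S := hV1S ha
    have hbS : b ∈ S := hV3S hb
    have ha2 : a ∉ V2 := fun h => (Finset.disjoint_left.1 hd12) ha h
    have ha3 : a ∉ V3 := fun h => (Finset.disjoint_left.1 hd13) ha h
    have hb1 : b ∉ V1 := fun h => (Finset.disjoint_left.1 hd13) h hb
    have hb2 : b ∉ V2 := fun h => (Finset.disjoint_left.1 hd23) h hb
    have hab : a ≠ b := fun h => hb1 (h ▸ ha)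
    rintro ⟨s, t⟩
    set H : E → ℝ := fun u => if u = a then s else if u = b then -t else 0 with hH
    refine ⟨fun v => H ↑v, ?_⟩
    have key : ∀ T : Finset E, T ⊆ S → (classSum S T) (fun v => H ↑v) = ∑ v ∈ T, H v :=
      fun T hTS => sum_attach_ite S T hTS H
    have e1 : ∑ v ∈ V1, H v = s := by
      rw [Finset.sum_eq_single a]
      · simp [hH]
      · intro v hv hva
        have hvb : v ≠ b := fun h => hb1 (h ▸ hv)
        simp [hH, hva, hvb]
      · intro h; exact absurd ha h
    have e2 : ∑ v ∈ V2, H v = 0 := by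
      apply Finset.sum_eq_zero
      intro v hv
      have hva : v ≠ a := fun h => ha2 (h ▸ hv)
      have hvb : v ≠ b := fun h => hb2 (h ▸ hv)
      simp [hH, hva, hvb]
    have e3 : ∑ v ∈ V3, H v = -t := by
      rw [Finset.sum_eq_single b]
      · simp [hH, hab.symm]
      · intro v hv hvb
        have hva : v ≠ a := fun h => ha3 (h ▸ hv)
        simp [hH, hva, hvb]
      · intro h; exact absurd hb h
    simp only [hψ, LinearMap.prod_apply, LinearMap.sub_apply, Function.prod,
      key V1 hV1S, key V2 hV2S, key V3 hV3S, e1, e2, e3]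
    rw [Prod.mk.injEq]
    constructor <;> linarith [e1, e2, e3]
  -- finrank of ker ψ is n
  have hdim : finrank ℝ (↥S → ℝ) = n + 2 := by
    rw [Module.finrank_fintype_fun_eq_card, Fintype.card_coe, hScard]
  have hkerψ : finrank ℝ (LinearMap.ker ψ) = n := by
    have h1 := LinearMap.finrank_range_add_finrank_ker ψ
    rw [hdim, LinearMap.range_eq_top.2 hsurj, finrank_top] at h1
    have h2 : finrank ℝ (ℝ × ℝ) = 2 := by simp
    omega
  -- range L ⊆ ker ψ
  have hsub : LinearMap.range L ≤ LinearMap.ker ψ := by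
    rintro _ ⟨w, rfl⟩
    have key : ∀ T : Finset E, T ⊆ S → (∑ v ∈ T, (v : E) = fun _ => (1 : ℝ)) →
        (classSum S T) (L w) = ∑ i, w i := by
      intro T hTS hTsum
      have : (classSum S T) (L w) = ∑ v ∈ T, ∑ i, v i * w i := by
        have := sum_attach_ite S T hTS (fun u => ∑ i, u i * w i)
        rw [← this]
        apply Finset.sum_congr rfl
        intro v _
        have hrfl : L w v = ∑ i, (v : E) i * w i := rfl
        by_cases hv : (v : E) ∈ T <;> simp [hv, hrfl]
      rw [this, Finset.sum_comm]
      apply Finset.sum_congr rfl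
      intro i _
      rw [← Finset.sum_mul]
      have : ∑ v ∈ T, v i = 1 := by
        have := congrFun hTsum i
        rwa [Finset.sum_apply] at this
      rw [this, one_mul]
    rw [LinearMap.mem_ker]
    have k1 := key V1 hV1S hsum1
    have k2 := key V2 hV2S hsum2
    have k3 := key V3 hV3S hsum3
    simp only [hψ, LinearMap.prod_apply, LinearMap.sub_apply, Function.prod, k1, k2, k3]
    simp
  -- hence equality
  have heq : LinearMap.range L = LinearMap.ker ψ := by
    apply Submodule.eq_of_le_of_finrank_le hsub
    rw [hkerψ]
    have : finrank ℝ (LinearMap.range L) = A.rank := rfl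
    rw [this, hrank]
  -- G is in ker ψ
  set G : ↥S → ℝ := fun v => g ↑v with hG
  have hGker : G ∈ LinearMap.ker ψ := by
    rw [LinearMap.mem_ker]
    have key : ∀ T : Finset E, T ⊆ S → (classSum S T) G = ∑ v ∈ T, g v :=
      fun T hTS => sum_attach_ite S T hTS g
    simp only [hψ, LinearMap.prod_apply, LinearMap.sub_apply, Function.prod,
      key V1 hV1S, key V2 hV2S, key V3 hV3S]
    rw [hg12, hg23]
    simp
    exact sub_self _
  rw [← heq] at hGker
  obtain ⟨w, hw⟩ := hGker
  refine ⟨{ toFun := fun u => ∑ i, u i * w i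
            map_add' := fun u u' => by simp [add_mul, Finset.sum_add_distrib]
            map_smul' := fun c u => by simp [Finset.mul_sum, mul_assoc] }, ?_⟩
  intro v hv
  have h1 : L w ⟨v, hv⟩ = g v := by rw [hw]
  rw [← h1]
  rfl


section Hull

variable {E : Type*} [AddCommGroup E] [Module ℝ E]

lemma centerMass_const_one (T : Finset E) (hne : T.Nonempty) :
    ((T.card : ℝ)⁻¹ • ∑ v ∈ T, v) ∈ convexHull ℝ (T : Set E) := by
  have h := T.centerMass_mem_convexHull (w := fun _ => (1 : ℝ)) (z := id)
    (by intro i _; norm_num)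
    (by
      rw [Finset.sum_const, nsmul_eq_mul, mul_one]
      exact_mod_cast Finset.card_pos.mpr hne)
    (fun i hi => Finset.mem_coe.mpr hi)
  simpa [Finset.centerMass, Finset.sum_const, nsmul_eq_mul, mul_one] using h

end Hull

lemma forward_aux_s15 (n : ℕ) (S V1 V2 V3 A B F : Finset (Fin (2 * n) → ℝ))
    (x : Fin (2 * n) → ℝ)
    (hScard : S.card = n + 2)
    (hunion : V1 ∪ V2 ∪ V3 = S)
    (hd12 : Disjoint V1 V2) (hd13 : Disjoint V1 V3) (hd23 : Disjoint V2 V3)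
    (hne1 : V1.Nonempty) (hne3 : V3.Nonempty)
    (hsum1 : ∑ v ∈ V1, v = fun _ => (1 : ℝ))
    (hsum2 : ∑ v ∈ V2, v = fun _ => (1 : ℝ))
    (hsum3 : ∑ v ∈ V3, v = fun _ => (1 : ℝ))
    (hspan : Module.finrank ℝ (Submodule.span ℝ (S : Set (Fin (2 * n) → ℝ))) = n)
    (hFS : F ⊆ S) (hAF : A ⊆ F) (hAne : A.Nonempty)
    (hsumA : ∑ v ∈ A, v = fun _ => (1 : ℝ)) (hcA : A.card = B.card)
    (hBS : B ⊆ S) (hxB : x ∈ B) (hxF : x ∉ F) (hm : 2 ≤ B.card)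
    (hsumB : ∑ v ∈ B, v = fun _ => (1 : ℝ))
    (h1 : V1 = B ∨ (Disjoint V1 B ∧ V1.card = B.card))
    (h2 : V2 = B ∨ (Disjoint V2 B ∧ V2.card = B.card))
    (h3 : V3 = B ∨ (Disjoint V3 B ∧ V3.card = B.card))
    (hext : IsExtreme ℝ (convexHull ℝ (S : Set (Fin (2 * n) → ℝ)))
      (convexHull ℝ (F : Set (Fin (2 * n) → ℝ)))) : False := by
  classical
  set m := B.card with hmdef
  have hm0 : (0 : ℝ) < m := by positivity
  set g : (Fin (2 * n) → ℝ) → ℝ :=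
    fun v => if v = x then 1 else if v ∈ B then 0 else 1 / (m : ℝ) with hg
  have sumT : ∀ T : Finset (Fin (2 * n) → ℝ),
      (T = B ∨ (Disjoint T B ∧ T.card = B.card)) → ∑ v ∈ T, g v = 1 := by
    rintro T (rfl | ⟨hdis, hcard⟩)
    · rw [Finset.sum_eq_single x]
      · simp [hg]
      · intro v hv hvx
        simp [hg, hvx, hv]
      · intro h; exact absurd hxB h
    · have : ∀ v ∈ T, g v = 1 / (m : ℝ) := by
        intro v hv
        have hvB : v ∉ B := Finset.disjoint_left.1 hdis hv
        have hvx : v ≠ x := fun h => hvB (h ▸ hxB)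
        simp [hg, hvx, hvB]
      rw [Finset.sum_congr rfl this, Finset.sum_const, nsmul_eq_mul, hcard]
      field_simp
      rfl
  obtain ⟨φ, hφ⟩ := ext_lemma n S V1 V2 V3 hScard hunion hd12 hd13 hd23 hne1 hne3
    hsum1 hsum2 hsum3 hspan g
    (by rw [sumT V1 h1, sumT V2 h2]) (by rw [sumT V2 h2, sumT V3 h3])
  -- the barycenter point
  set p : Fin (2 * n) → ℝ := (m : ℝ)⁻¹ • (fun _ => (1 : ℝ)) with hp
  have hpF : p ∈ convexHull ℝ (F : Set (Fin (2 * n) → ℝ)) := by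
    have h := centerMass_const_one A hAne
    rw [hsumA, hcA] at h
    exact convexHull_mono (by exact_mod_cast hAF) h
  have hexne : (B.erase x).Nonempty := by
    rw [← Finset.card_pos, Finset.card_erase_of_mem hxB]
    omega
  set q : Fin (2 * n) → ℝ := ((B.erase x).card : ℝ)⁻¹ • ∑ v ∈ B.erase x, v with hq
  have hqS : q ∈ convexHull ℝ (S : Set (Fin (2 * n) → ℝ)) := by
    have h := centerMass_const_one (B.erase x) hexne
    exact convexHull_mono (by exact_mod_cast (Finset.erase_subset x B).trans hBS) h
  have hxS : x ∈ S := hBS hxB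
  have hcerase : ((B.erase x).card : ℝ) = (m : ℝ) - 1 := by
    rw [Finset.card_erase_of_mem hxB, ← hmdef]
    push_cast [Nat.cast_sub (by omega : 1 ≤ m)]
    ring
  have hseg : p ∈ openSegment ℝ x q := by
    refine ⟨(m : ℝ)⁻¹, 1 - (m : ℝ)⁻¹, by positivity, ?_, by ring, ?_⟩
    · have h2 : (1 : ℝ) < m := by exact_mod_cast (by omega : 1 < m)
      have : (m : ℝ)⁻¹ < 1 := inv_lt_one_of_one_lt₀ h2
      linarith
    · rw [hq, smul_smul, hcerase]
      have hm1 : (m : ℝ) - 1 ≠ 0 := by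
        have : (2 : ℝ) ≤ m := by exact_mod_cast hm
        linarith
      have hmne : (m : ℝ) ≠ 0 := ne_of_gt hm0
      have hco : (1 - (m : ℝ)⁻¹) * ((m : ℝ) - 1)⁻¹ = (m : ℝ)⁻¹ := by
        field_simp
      rw [hco, ← smul_add, Finset.add_sum_erase B (fun v => v) hxB, hsumB]
  have hxhull : x ∈ convexHull ℝ (F : Set (Fin (2 * n) → ℝ)) :=
    hext.2 (subset_convexHull ℝ _ (Finset.mem_coe.mpr hxS)) hqS hpF hseg
  have hbound : φ x ≤ 1 / 2 := by
    refine hull_le' φ F (1 / 2) ?_ x hxhull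
    intro v hv
    rw [hφ v (hFS hv)]
    have hvx : v ≠ x := fun h => hxF (h ▸ hv)
    by_cases hvB : v ∈ B
    · simp [hg, hvx, hvB]
    · simp only [hg, if_neg hvx, if_neg hvB]
      rw [div_le_div_iff₀ hm0 (by norm_num)]
      have : (2 : ℝ) ≤ m := by exact_mod_cast hm
      linarith
  have hφx : φ x = 1 := by rw [hφ x hxS]; simp [hg]
  rw [hφx] at hbound
  linarith

theorem stmt_15
    (n : ℕ) (hn : 0 < n)
    (S V1 V2 V3 : Finset (Fin (2 * n) → ℝ))
    (h01 : ∀ v ∈ S, ∀ i, v i = 0 ∨ v i = 1)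
    (hScard : S.card = n + 2)
    (hunion : V1 ∪ V2 ∪ V3 = S)
    (hd12 : Disjoint V1 V2) (hd13 : Disjoint V1 V3) (hd23 : Disjoint V2 V3)
    (hne1 : V1.Nonempty) (hne2 : V2.Nonempty) (hne3 : V3.Nonempty)
    (hsum1 : ∑ v ∈ V1, v = fun _ => (1 : ℝ))
    (hsum2 : ∑ v ∈ V2, v = fun _ => (1 : ℝ))
    (hsum3 : ∑ v ∈ V3, v = fun _ => (1 : ℝ))
    (hspan : Module.finrank ℝ (Submodule.span ℝ (S : Set (Fin (2 * n) → ℝ))) = n)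
    (hm : 2 ≤ V1.card) (h12 : V1.card = V2.card) (h23 : V2.card = V3.card)
    : ∀ F ⊆ S, F.Nonempty →
      ((IsExtreme ℝ (convexHull ℝ (S : Set (Fin (2 * n) → ℝ)))
          (convexHull ℝ (F : Set (Fin (2 * n) → ℝ))) ∧ F ≠ S) ↔
        (¬ V1 ⊆ F ∧ ¬ V2 ⊆ F ∧ ¬ V3 ⊆ F)) := by
  classical
  intro F hFS hFne
  have hV1S : V1 ⊆ S := hunion ▸ (Finset.subset_union_left.trans Finset.subset_union_left)
  have hV2S : V2 ⊆ S := hunion ▸ (Finset.subset_union_right.trans Finset.subset_union_left)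
  have hV3S : V3 ⊆ S := hunion ▸ Finset.subset_union_right
  constructor
  · rintro ⟨hext, hFneS⟩
    obtain ⟨x, hxS, hxF⟩ := Finset.exists_of_ssubset (lt_of_le_of_ne hFS hFneS)
    have hxU : x ∈ V1 ∪ V2 ∪ V3 := by rw [hunion]; exact hxS
    refine ⟨fun hsub => ?_, fun hsub => ?_, fun hsub => ?_⟩
    · -- V1 ⊆ F
      have hx1 : x ∉ V1 := fun h => hxF (hsub h)
      rcases Finset.mem_union.1 hxU with h | hx3
      · rcases Finset.mem_union.1 h with hx1' | hx2
        · exact hx1 hx1'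
        · exact forward_aux_s15 n S V1 V2 V3 V1 V2 F x hScard hunion hd12 hd13 hd23
            hne1 hne3 hsum1 hsum2 hsum3 hspan hFS hsub hne1 hsum1 h12 hV2S hx2 hxF
            (h12 ▸ hm) hsum2 (Or.inr ⟨hd12, h12⟩) (Or.inl rfl)
            (Or.inr ⟨hd23.symm, h23.symm⟩) hext
      · exact forward_aux_s15 n S V1 V2 V3 V1 V3 F x hScard hunion hd12 hd13 hd23
          hne1 hne3 hsum1 hsum2 hsum3 hspan hFS hsub hne1 hsum1 (h12.trans h23) hV3S hx3 hxF
          ((h12.trans h23) ▸ hm) hsum3 (Or.inr ⟨hd13, h12.trans h23⟩)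
          (Or.inr ⟨hd23, h23⟩) (Or.inl rfl) hext
    · -- V2 ⊆ F
      have hx2 : x ∉ V2 := fun h => hxF (hsub h)
      rcases Finset.mem_union.1 hxU with h | hx3
      · rcases Finset.mem_union.1 h with hx1 | hx2'
        · exact forward_aux_s15 n S V1 V2 V3 V2 V1 F x hScard hunion hd12 hd13 hd23
            hne1 hne3 hsum1 hsum2 hsum3 hspan hFS hsub hne2 hsum2 h12.symm hV1S hx1 hxF
            hm hsum1 (Or.inl rfl) (Or.inr ⟨hd12.symm, h12.symm⟩)
            (Or.inr ⟨hd13.symm, (h12.trans h23).symm⟩) hext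
        · exact hx2 hx2'
      · exact forward_aux_s15 n S V1 V2 V3 V2 V3 F x hScard hunion hd12 hd13 hd23
          hne1 hne3 hsum1 hsum2 hsum3 hspan hFS hsub hne2 hsum2 h23 hV3S hx3 hxF
          ((h12.trans h23) ▸ hm) hsum3 (Or.inr ⟨hd13, h12.trans h23⟩)
          (Or.inr ⟨hd23, h23⟩) (Or.inl rfl) hext
    · -- V3 ⊆ F
      have hx3 : x ∉ V3 := fun h => hxF (hsub h)
      rcases Finset.mem_union.1 hxU with h | hx3'
      · rcases Finset.mem_union.1 h with hx1 | hx2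
        · exact forward_aux_s15 n S V1 V2 V3 V3 V1 F x hScard hunion hd12 hd13 hd23
            hne1 hne3 hsum1 hsum2 hsum3 hspan hFS hsub hne3 hsum3 (h12.trans h23).symm hV1S
            hx1 hxF hm hsum1 (Or.inl rfl) (Or.inr ⟨hd12.symm, h12.symm⟩)
            (Or.inr ⟨hd13.symm, (h12.trans h23).symm⟩) hext
        · exact forward_aux_s15 n S V1 V2 V3 V3 V2 F x hScard hunion hd12 hd13 hd23
            hne1 hne3 hsum1 hsum2 hsum3 hspan hFS hsub hne3 hsum3 h23.symm hV2S hx2 hxF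
            (h12 ▸ hm) hsum2 (Or.inr ⟨hd12, h12⟩) (Or.inl rfl)
            (Or.inr ⟨hd23.symm, h23.symm⟩) hext
      · exact hx3 hx3'
  · rintro ⟨hn1, hn2, hn3⟩
    have hD1 : (V1 \ F).Nonempty := Finset.sdiff_nonempty.mpr hn1
    have hD2 : (V2 \ F).Nonempty := Finset.sdiff_nonempty.mpr hn2
    have hD3 : (V3 \ F).Nonempty := Finset.sdiff_nonempty.mpr hn3
    set g : (Fin (2 * n) → ℝ) → ℝ := fun v =>
      if v ∈ F then 0
      else if v ∈ V1 then -(1 / (((V1 \ F).card : ℝ)))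
      else if v ∈ V2 then -(1 / (((V2 \ F).card : ℝ)))
      else -(1 / (((V3 \ F).card : ℝ))) with hgdef
    have key : ∀ T : Finset (Fin (2 * n) → ℝ),
        (∀ v ∈ T, v ∉ F → g v = -(1 / (((T \ F).card : ℝ)))) → (T \ F).Nonempty →
        ∑ v ∈ T, g v = -1 := by
      intro T hval hTne
      rw [← Finset.sum_inter_add_sum_sdiff T F g]
      have hz : ∑ v ∈ T ∩ F, g v = 0 :=
        Finset.sum_eq_zero (fun v hv => by simp [hgdef, (Finset.mem_inter.1 hv).2])
      have hc : ∑ v ∈ T \ F, g v = -1 := by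
        have hval' : ∀ v ∈ T \ F, g v = -(1 / (((T \ F).card : ℝ))) := fun v hv =>
          hval v (Finset.mem_sdiff.1 hv).1 (Finset.mem_sdiff.1 hv).2
        rw [Finset.sum_congr rfl hval', Finset.sum_const, nsmul_eq_mul]
        have hpos : (0 : ℝ) < ((T \ F).card : ℝ) := by
          exact_mod_cast Finset.card_pos.mpr hTne
        field_simp
      rw [hz, hc, zero_add]
    have hs1 : ∑ v ∈ V1, g v = -1 :=
      key V1 (fun v hv hvF => by simp [hgdef, hvF, hv]) hD1
    have hs2 : ∑ v ∈ V2, g v = -1 :=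
      key V2 (fun v hv hvF => by
        have hv1 : v ∉ V1 := fun h => Finset.disjoint_left.1 hd12 h hv
        simp [hgdef, hvF, hv, hv1]) hD2
    have hs3 : ∑ v ∈ V3, g v = -1 :=
      key V3 (fun v hv hvF => by
        have hv1 : v ∉ V1 := fun h => Finset.disjoint_left.1 hd13 h hv
        have hv2 : v ∉ V2 := fun h => Finset.disjoint_left.1 hd23 h hv
        simp [hgdef, hvF, hv1, hv2]) hD3
    obtain ⟨φ, hφ⟩ := ext_lemma n S V1 V2 V3 hScard hunion hd12 hd13 hd23 hne1 hne3
      hsum1 hsum2 hsum3 hspan g (hs1.trans hs2.symm) (hs2.trans hs3.symm)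
    constructor
    · apply face_lemma φ S F hFS
      · intro v hv
        rw [hφ v hv]
        simp only [hgdef]
        split_ifs
        · exact le_refl 0
        all_goals
          exact neg_nonpos.mpr (by positivity)
      · intro v hv
        rw [hφ v (hFS hv)]
        simp [hgdef, hv]
      · intro v hv h0
        by_contra hvF
        rw [hφ v hv] at h0
        have hxU : v ∈ V1 ∪ V2 ∪ V3 := by rw [hunion]; exact hv
        have hk1 : (0 : ℝ) < ((V1 \ F).card : ℝ) := by
          exact_mod_cast Finset.card_pos.mpr hD1
        have hk2 : (0 : ℝ) < ((V2 \ F).card : ℝ) := by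
          exact_mod_cast Finset.card_pos.mpr hD2
        have hk3 : (0 : ℝ) < ((V3 \ F).card : ℝ) := by
          exact_mod_cast Finset.card_pos.mpr hD3
        rcases Finset.mem_union.1 hxU with h | hv3
        · rcases Finset.mem_union.1 h with hv1 | hv2
          · rw [hgdef] at h0
            simp only [if_neg hvF, if_pos hv1] at h0
            have : (0:ℝ) < 1 / ((V1 \ F).card : ℝ) := by positivity
            linarith [h0]
          · have hv1 : v ∉ V1 := fun h => Finset.disjoint_left.1 hd12 h hv2
            rw [hgdef] at h0
            simp only [if_neg hvF, if_neg hv1, if_pos hv2] at h0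
            have : (0:ℝ) < 1 / ((V2 \ F).card : ℝ) := by positivity
            linarith [h0]
        · have hv1 : v ∉ V1 := fun h => Finset.disjoint_left.1 hd13 h hv3
          have hv2 : v ∉ V2 := fun h => Finset.disjoint_left.1 hd23 h hv3
          rw [hgdef] at h0
          simp only [if_neg hvF, if_neg hv1, if_neg hv2] at h0
          have : (0:ℝ) < 1 / ((V3 \ F).card : ℝ) := by positivity
          linarith [h0]
    · obtain ⟨v, hv⟩ := hD1
      intro hEq
      exact (Finset.mem_sdiff.1 hv).2 (hEq ▸ hV1S (Finset.mem_sdiff.1 hv).1)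
end

section
/- (Simpliciality, case m₁ = m₂ = m₃ ≥ 2) Assume m₁ = m₂ = m₃ ≥ 2. Then conv(S) is a simplicial polytope: for every nonempty subset F ⊆ S with F ≠ S such that the convex hull of F is an extreme subset of the convex hull of S, the set F is affinely independent. -/
open Finset

lemma ker_structure (n : ℕ)
    (S V1 V2 V3 : Finset (Fin (2 * n) → ℝ))
    (hScard : S.card = n + 2)
    (hunion : V1 ∪ V2 ∪ V3 = S)
    (hd12 : Disjoint V1 V2) (hd13 : Disjoint V1 V3) (hd23 : Disjoint V2 V3)
    (hne1 : V1.Nonempty) (hne3 : V3.Nonempty)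
    (hsum1 : ∑ v ∈ V1, v = fun _ => (1 : ℝ))
    (hsum2 : ∑ v ∈ V2, v = fun _ => (1 : ℝ))
    (hsum3 : ∑ v ∈ V3, v = fun _ => (1 : ℝ))
    (hspan : Module.finrank ℝ (Submodule.span ℝ (S : Set (Fin (2 * n) → ℝ))) = n)
    (c : {x // x ∈ S} → ℝ)
    (hc : ∑ v ∈ S.attach, c v • (v : Fin (2 * n) → ℝ) = 0) :
    ∃ a b : ℝ, ∀ v : {x // x ∈ S},
      c v = a * ((if (v : Fin (2 * n) → ℝ) ∈ V1 then 1 else 0)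
                - (if (v : Fin (2 * n) → ℝ) ∈ V2 then 1 else 0))
          + b * ((if (v : Fin (2 * n) → ℝ) ∈ V2 then 1 else 0)
                - (if (v : Fin (2 * n) → ℝ) ∈ V3 then 1 else 0)) := by
  classical
  have hV1S : V1 ⊆ S := hunion ▸ (subset_union_left.trans subset_union_left)
  have hV2S : V2 ⊆ S := hunion ▸ (subset_union_right.trans subset_union_left)
  have hV3S : V3 ⊆ S := hunion ▸ subset_union_right
  set φ : ({x // x ∈ S} → ℝ) →ₗ[ℝ] (Fin (2 * n) → ℝ) :=
    Fintype.linearCombination ℝ (fun v : {x // x ∈ S} => (v : Fin (2 * n) → ℝ)) with hφ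
  have hφapp : ∀ d : {x // x ∈ S} → ℝ, φ d = ∑ v ∈ S.attach, d v • (v : Fin (2 * n) → ℝ) := by
    intro d
    rw [hφ, Fintype.linearCombination_apply, ← Finset.univ_eq_attach]
  have hrange : LinearMap.range φ = Submodule.span ℝ (S : Set (Fin (2 * n) → ℝ)) := by
    rw [hφ, Fintype.range_linearCombination]
    congr 1
    ext x; simp
  have hkerdim : Module.finrank ℝ (LinearMap.ker φ) = 2 := by
    have h1 := LinearMap.finrank_range_add_finrank_ker φ
    rw [hrange, hspan] at h1
    have h2 : Module.finrank ℝ ({x // x ∈ S} → ℝ) = n + 2 := by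
      rw [Module.finrank_fintype_fun_eq_card, Fintype.card_coe, hScard]
    omega
  set r1 : {x // x ∈ S} → ℝ := fun v =>
    (if (v : Fin (2 * n) → ℝ) ∈ V1 then 1 else 0) - (if (v : Fin (2 * n) → ℝ) ∈ V2 then 1 else 0) with hr1
  set r2 : {x // x ∈ S} → ℝ := fun v =>
    (if (v : Fin (2 * n) → ℝ) ∈ V2 then 1 else 0) - (if (v : Fin (2 * n) → ℝ) ∈ V3 then 1 else 0) with hr2
  have hsplit : ∀ (W : Finset (Fin (2 * n) → ℝ)), W ⊆ S →
      ∑ v ∈ S.attach, (if (v : Fin (2 * n) → ℝ) ∈ W then (1:ℝ) else 0) • (v : Fin (2 * n) → ℝ) = ∑ v ∈ W, v := by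
    intro W hWS
    rw [Finset.sum_attach S (fun x => (if x ∈ W then (1:ℝ) else 0) • x)]
    simp only [ite_smul, one_smul, zero_smul]
    rw [Finset.sum_ite_mem, Finset.inter_eq_right.mpr hWS]
  have hker1 : r1 ∈ LinearMap.ker φ := by
    rw [LinearMap.mem_ker, hφapp]
    simp only [hr1, sub_smul, Finset.sum_sub_distrib]
    rw [hsplit V1 hV1S, hsplit V2 hV2S, hsum1, hsum2, sub_self]
  have hker2 : r2 ∈ LinearMap.ker φ := by
    rw [LinearMap.mem_ker, hφapp]
    simp only [hr2, sub_smul, Finset.sum_sub_distrib]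
    rw [hsplit V2 hV2S, hsplit V3 hV3S, hsum2, hsum3, sub_self]
  obtain ⟨x1, hx1⟩ := hne1
  obtain ⟨x3, hx3⟩ := hne3
  have hx1' : x1 ∉ V2 := Finset.disjoint_left.mp hd12 hx1
  have hx1'' : x1 ∉ V3 := Finset.disjoint_left.mp hd13 hx1
  have hx3' : x3 ∉ V1 := fun h => (Finset.disjoint_left.mp hd13 h) hx3
  have hx3'' : x3 ∉ V2 := fun h => (Finset.disjoint_left.mp hd23 h) hx3
  have hindep : LinearIndependent ℝ ![r1, r2] := by
    rw [LinearIndependent.pair_iff]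
    intro s t hst
    have h1 := congrFun hst ⟨x1, hV1S hx1⟩
    have h3 := congrFun hst ⟨x3, hV3S hx3⟩
    simp only [Pi.add_apply, Pi.smul_apply, smul_eq_mul, hr1, hr2, Pi.zero_apply,
      if_pos hx1, if_neg hx1', if_neg hx1'', if_pos hx3, if_neg hx3', if_neg hx3''] at h1 h3
    constructor <;> linarith
  have hle : Submodule.span ℝ {r1, r2} ≤ LinearMap.ker φ := by
    rw [Submodule.span_le]
    rintro x (rfl | rfl)
    · exact hker1
    · exact hker2
  have hspan2 : Module.finrank ℝ (Submodule.span ℝ ({r1, r2} : Set ({x // x ∈ S} → ℝ))) = 2 := by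
    have := finrank_span_eq_card hindep
    rw [show Set.range ![r1, r2] = {r1, r2} by ext x; simp [Matrix.range_cons]; tauto] at this
    simpa using this
  have heq : Submodule.span ℝ ({r1, r2} : Set _) = LinearMap.ker φ :=
    Submodule.eq_of_le_of_finrank_le hle (by rw [hkerdim, hspan2])
  have hcmem : c ∈ LinearMap.ker φ := by rw [LinearMap.mem_ker, hφapp]; exact hc
  rw [← heq] at hcmem
  obtain ⟨a, b, hab⟩ := Submodule.mem_span_pair.mp hcmem
  refine ⟨a, b, fun v => ?_⟩
  have := congrFun hab v
  simp only [Pi.add_apply, Pi.smul_apply, smul_eq_mul] at this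
  rw [← this]

theorem stmt_16
    (n : ℕ) (hn : 0 < n)
    (S V1 V2 V3 : Finset (Fin (2 * n) → ℝ))
    (h01 : ∀ v ∈ S, ∀ i, v i = 0 ∨ v i = 1)
    (hScard : S.card = n + 2)
    (hunion : V1 ∪ V2 ∪ V3 = S)
    (hd12 : Disjoint V1 V2) (hd13 : Disjoint V1 V3) (hd23 : Disjoint V2 V3)
    (hne1 : V1.Nonempty) (hne2 : V2.Nonempty) (hne3 : V3.Nonempty)
    (hsum1 : ∑ v ∈ V1, v = fun _ => (1 : ℝ))
    (hsum2 : ∑ v ∈ V2, v = fun _ => (1 : ℝ))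
    (hsum3 : ∑ v ∈ V3, v = fun _ => (1 : ℝ))
    (hspan : Module.finrank ℝ (Submodule.span ℝ (S : Set (Fin (2 * n) → ℝ))) = n)
    (hm : 2 ≤ V1.card) (h12 : V1.card = V2.card) (h23 : V2.card = V3.card)
    : ∀ F ⊆ S, F.Nonempty → F ≠ S →
      IsExtreme ℝ (convexHull ℝ (S : Set (Fin (2 * n) → ℝ)))
        (convexHull ℝ (F : Set (Fin (2 * n) → ℝ))) →
      AffineIndependent ℝ (fun x : {x // x ∈ F} => (x : Fin (2 * n) → ℝ)) := by
  classical
  intro F hFS hFne hFneS hExt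
  have hV1S : V1 ⊆ S := hunion ▸ (subset_union_left.trans subset_union_left)
  have hV2S : V2 ⊆ S := hunion ▸ (subset_union_right.trans subset_union_left)
  have hV3S : V3 ⊆ S := hunion ▸ subset_union_right
  have hclass : ∀ x ∈ S, x ∈ V1 ∨ x ∈ V2 ∨ x ∈ V3 := by
    intro x hx
    rw [← hunion] at hx
    simpa [Finset.mem_union, or_assoc] using hx
  have hfacts : ∀ C : Finset (Fin (2 * n) → ℝ), C = V1 ∨ C = V2 ∨ C = V3 →
      C ⊆ S ∧ C.card = V1.card ∧ ∑ v ∈ C, v = (fun _ => (1 : ℝ)) := by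
    rintro C (rfl | rfl | rfl)
    · exact ⟨hV1S, rfl, hsum1⟩
    · exact ⟨hV2S, h12.symm, hsum2⟩
    · exact ⟨hV3S, (h12.trans h23).symm, hsum3⟩
  -- key: an element of a class that is outside F cannot lie in the hull of F
  have key : ∀ C : Finset (Fin (2 * n) → ℝ), (C = V1 ∨ C = V2 ∨ C = V3) →
      ∀ y, y ∈ C → y ∉ F → y ∈ convexHull ℝ (F : Set (Fin (2 * n) → ℝ)) → False := by
    intro C hC y hyC hyF hyhull
    obtain ⟨hCS, hCcard, hCsum⟩ := hfacts C hC
    obtain ⟨lam, hlam0, hlam1, hlamsum⟩ := Finset.mem_convexHull'.mp hyhull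
    have hyS : y ∈ S := hCS hyC
    set c : {x // x ∈ S} → ℝ := fun v =>
      (if (v : Fin (2 * n) → ℝ) ∈ F then lam v else 0) -
        (if (v : Fin (2 * n) → ℝ) = y then 1 else 0) with hcdef
    have hc : ∑ v ∈ S.attach, c v • (v : Fin (2 * n) → ℝ) = 0 := by
      rw [Finset.sum_attach S (fun x => ((if x ∈ F then lam x else 0) -
        (if x = y then 1 else 0)) • x)]
      simp only [sub_smul, Finset.sum_sub_distrib, ite_smul, zero_smul, one_smul]
      have A : ∑ x ∈ S, (if x ∈ F then lam x • x else 0) = y := by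
        rw [Finset.sum_ite_mem, Finset.inter_eq_right.mpr hFS]
        exact hlamsum
      have B : ∑ x ∈ S, (if x = y then x else 0) = y := by
        rw [Finset.sum_ite_eq' S y (fun x => x), if_pos hyS]
      rw [A, B, sub_self]
    obtain ⟨a, b, hab⟩ := ker_structure n S V1 V2 V3 hScard hunion hd12 hd13 hd23
      hne1 hne3 hsum1 hsum2 hsum3 hspan c hc
    have hCcard2 : 1 < C.card := by omega
    obtain ⟨y', hy'C, hy'ne⟩ := Finset.exists_mem_ne hCcard2 y
    have hy'S : y' ∈ S := hCS hy'C
    have h1 := hab ⟨y, hyS⟩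
    have h2 := hab ⟨y', hy'S⟩
    have hcy : c ⟨y, hyS⟩ = -1 := by simp [hcdef, hyF]
    have hcy' : 0 ≤ c ⟨y', hy'S⟩ := by
      simp only [hcdef, if_neg hy'ne, sub_zero]
      split_ifs with h
      · exact hlam0 y' h
      · exact le_rfl
    have hd12' := Finset.disjoint_left.mp hd12
    have hd13' := Finset.disjoint_left.mp hd13
    have hd23' := Finset.disjoint_left.mp hd23
    have hd21' := Finset.disjoint_right.mp hd12
    have hd31' := Finset.disjoint_right.mp hd13
    have hd32' := Finset.disjoint_right.mp hd23
    rcases hC with rfl | rfl | rfl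
    · rw [if_pos hyC, if_neg (hd12' hyC), if_neg (hd13' hyC), hcy] at h1
      rw [if_pos hy'C, if_neg (hd12' hy'C), if_neg (hd13' hy'C)] at h2
      rw [h2] at hcy'; linarith
    · rw [if_pos hyC, if_neg (hd21' hyC), if_neg (hd23' hyC), hcy] at h1
      rw [if_pos hy'C, if_neg (hd21' hy'C), if_neg (hd23' hy'C)] at h2
      rw [h2] at hcy'; linarith
    · rw [if_pos hyC, if_neg (hd31' hyC), if_neg (hd32' hyC), hcy] at h1
      rw [if_pos hy'C, if_neg (hd31' hy'C), if_neg (hd32' hy'C)] at h2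
      rw [h2] at hcy'; linarith
  -- step: no class is contained in F
  have step : ∀ A : Finset (Fin (2 * n) → ℝ), (A = V1 ∨ A = V2 ∨ A = V3) →
      A ⊆ F → False := by
    intro A hA hAF
    obtain ⟨hAS, hAcard, hAsum⟩ := hfacts A hA
    obtain ⟨y, hyS, hyF⟩ : ∃ y, y ∈ S ∧ y ∉ F := by
      obtain ⟨y, hy1, hy2⟩ := Finset.exists_of_ssubset (lt_of_le_of_ne hFS hFneS)
      exact ⟨y, hy1, hy2⟩
    obtain ⟨C, hC, hyC⟩ : ∃ C, (C = V1 ∨ C = V2 ∨ C = V3) ∧ y ∈ C := by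
      rcases hclass y hyS with h | h | h
      exacts [⟨V1, Or.inl rfl, h⟩, ⟨V2, Or.inr (Or.inl rfl), h⟩, ⟨V3, Or.inr (Or.inr rfl), h⟩]
    obtain ⟨hCS, hCcard, hCsum⟩ := hfacts C hC
    set μ : ℝ := (V1.card : ℝ) with hμ
    have hμ2 : (2 : ℝ) ≤ μ := by rw [hμ]; exact_mod_cast hm
    have hμ0 : μ ≠ 0 := by linarith
    have hμ10 : μ - 1 ≠ 0 := by linarith
    set p : Fin (2 * n) → ℝ := μ⁻¹ • (fun _ => (1 : ℝ)) with hp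
    have hApos : A.Nonempty := Finset.card_pos.mp (by omega)
    have hpF : p ∈ convexHull ℝ (F : Set (Fin (2 * n) → ℝ)) := by
      have hmem := Finset.centerMass_mem_convexHull A (w := fun _ => (1 : ℝ))
        (fun i _ => zero_le_one) (by
          rw [Finset.sum_const, nsmul_eq_mul, mul_one, hAcard]
          have : 0 < V1.card := by omega
          exact_mod_cast this)
        (z := fun x => x) (fun i hi => Finset.mem_coe.mpr (hAF hi))
      have : A.centerMass (fun _ => (1 : ℝ)) (fun x => x) = p := by
        rw [Finset.centerMass]
        simp only [one_smul, Finset.sum_const, nsmul_eq_mul, mul_one, hAcard, hAsum, hp]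
        rfl
      rwa [this] at hmem
    set D : Finset (Fin (2 * n) → ℝ) := C.erase y with hD
    have hDcard : D.card = V1.card - 1 := by rw [hD, Finset.card_erase_of_mem hyC, hCcard]
    have hDsum : ∑ v ∈ D, v = (fun _ => (1 : ℝ)) - y := by
      have := Finset.sum_erase_add C (fun v => v) hyC
      rw [hCsum] at this
      rw [hD]
      exact eq_sub_of_add_eq this
    have hDcardR : ((D.card : ℝ)) = μ - 1 := by
      rw [hDcard, Nat.cast_sub (by omega), hμ]; norm_num
    set z : Fin (2 * n) → ℝ := (μ - 1)⁻¹ • ((fun _ => (1 : ℝ)) - y) with hz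
    have hzS : z ∈ convexHull ℝ (S : Set (Fin (2 * n) → ℝ)) := by
      have hmem := Finset.centerMass_mem_convexHull D (w := fun _ => (1 : ℝ))
        (fun i _ => zero_le_one) (by
          rw [Finset.sum_const, nsmul_eq_mul, mul_one, hDcardR]
          linarith)
        (z := fun x => x) (fun i hi => Finset.mem_coe.mpr (hCS (Finset.erase_subset _ _ hi)))
      have : D.centerMass (fun _ => (1 : ℝ)) (fun x => x) = z := by
        rw [Finset.centerMass]
        simp only [one_smul, Finset.sum_const, nsmul_eq_mul, mul_one, hDcardR, hDsum, hz]
      rwa [this] at hmem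
    have hyhullS : y ∈ convexHull ℝ (S : Set (Fin (2 * n) → ℝ)) :=
      subset_convexHull ℝ _ (Finset.mem_coe.mpr hyS)
    have hseg : p ∈ openSegment ℝ y z := by
      refine ⟨μ⁻¹, 1 - μ⁻¹, by positivity, ?_, by ring, ?_⟩
      · exact sub_pos.mpr ((inv_lt_one₀ (by linarith)).mpr (by linarith))
      · rw [hz, hp, smul_smul]
        have hcoef : (1 - μ⁻¹) * (μ - 1)⁻¹ = μ⁻¹ := by
          field_simp
        rw [hcoef, smul_sub]
        abel
    have hyhullF : y ∈ convexHull ℝ (F : Set (Fin (2 * n) → ℝ)) :=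
      hExt.2 hyhullS hzS hpF hseg
    exact key C hC y hyC hyF hyhullF
  -- main affine independence argument
  rw [affineIndependent_iff]
  intro t w hw0 hws
  set W : (Fin (2 * n) → ℝ) → ℝ :=
    fun x => ∑ j ∈ t, if (j : Fin (2 * n) → ℝ) = x then w j else 0 with hW
  have hWF : ∀ x, x ∉ F → W x = 0 := by
    intro x hx
    rw [hW]
    apply Finset.sum_eq_zero
    intro j _
    rw [if_neg]
    intro h
    exact hx (h ▸ j.2)
  have hWi : ∀ j ∈ t, W (j : Fin (2 * n) → ℝ) = w j := by
    intro j hj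
    rw [hW]
    simp only [Subtype.coe_inj]
    rw [Finset.sum_ite_eq' t j w, if_pos hj]
  have hc : ∑ v ∈ S.attach, W (v : Fin (2 * n) → ℝ) • (v : Fin (2 * n) → ℝ) = 0 := by
    rw [Finset.sum_attach S (fun x => W x • x)]
    have hrw : ∀ x ∈ S, W x • x =
        ∑ j ∈ t, (if (j : Fin (2 * n) → ℝ) = x then w j • (j : Fin (2 * n) → ℝ) else 0) := by
      intro x _
      rw [hW, Finset.sum_smul]
      refine Finset.sum_congr rfl fun j _ => ?_
      rw [ite_smul, zero_smul]
      split_ifs with h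
      · rw [h]
      · rfl
    rw [Finset.sum_congr rfl hrw, Finset.sum_comm]
    refine Eq.trans (Finset.sum_congr rfl fun j _ => ?_) hws
    rw [Finset.sum_ite_eq S (j : Fin (2 * n) → ℝ)
      (fun _ => w j • (j : Fin (2 * n) → ℝ)), if_pos (hFS j.2)]
  obtain ⟨a, b, hab⟩ := ker_structure n S V1 V2 V3 hScard hunion hd12 hd13 hd23
    hne1 hne3 hsum1 hsum2 hsum3 hspan (fun v => W (v : Fin (2 * n) → ℝ)) hc
  have hd12' := Finset.disjoint_left.mp hd12
  have hd13' := Finset.disjoint_left.mp hd13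
  have hd23' := Finset.disjoint_left.mp hd23
  have hd31' := Finset.disjoint_right.mp hd13
  have hd32' := Finset.disjoint_right.mp hd23
  have ha : a = 0 := by
    by_contra ha
    refine step V1 (Or.inl rfl) fun x hx => ?_
    by_contra hxF
    have h1 := hab ⟨x, hV1S hx⟩
    rw [if_pos hx, if_neg (hd12' hx), if_neg (hd13' hx)] at h1
    have h0 : W x = 0 := hWF x hxF
    rw [show ((⟨x, hV1S hx⟩ : {x // x ∈ S}) : Fin (2 * n) → ℝ) = x from rfl, h0] at h1
    apply ha
    nlinarith [h1]
  have hb : b = 0 := by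
    by_contra hb
    refine step V3 (Or.inr (Or.inr rfl)) fun x hx => ?_
    by_contra hxF
    have h1 := hab ⟨x, hV3S hx⟩
    rw [if_pos hx, if_neg (hd31' hx), if_neg (hd32' hx)] at h1
    have h0 : W x = 0 := hWF x hxF
    rw [show ((⟨x, hV3S hx⟩ : {x // x ∈ S}) : Fin (2 * n) → ℝ) = x from rfl, h0] at h1
    apply hb
    nlinarith [h1]
  intro i hit
  rw [← hWi i hit]
  have h1 := hab ⟨(i : Fin (2 * n) → ℝ), hFS i.2⟩
  rw [ha, hb] at h1
  simpa using h1
end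

section
/- (Neighborliness, case m₁ = m₂ = m₃ = m ≥ 2) Assume m₁ = m₂ = m₃ = m ≥ 2. Then conv(S) is (m−1)-neighborly: every nonempty subset F ⊆ S with |F| ≤ m − 1 satisfies F ≠ S and the convex hull of F is an extreme subset of the convex hull of S (i.e., F is the vertex set of a proper face of conv(S)). -/
open Finset

lemma face_of_functional {N : ℕ} (S F : Finset (Fin N → ℝ)) (hFS : F ⊆ S) (hne : F.Nonempty)
    (l : (Fin N → ℝ) →L[ℝ] ℝ)
    (hF : ∀ v ∈ F, l v = 1) (hS : ∀ v ∈ S, v ∉ F → l v < 1) :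
    IsExtreme ℝ (convexHull ℝ (S : Set (Fin N → ℝ))) (convexHull ℝ (F : Set (Fin N → ℝ))) := by
  classical
  have hlin : IsLinearMap ℝ (fun x => l x) := ⟨l.map_add, l.map_smul⟩
  have hle : ∀ x ∈ convexHull ℝ (S : Set (Fin N → ℝ)), l x ≤ 1 := by
    intro x hx
    refine convexHull_min (fun v hv => ?_) (convex_halfSpace_le hlin 1) hx
    rcases Classical.em (v ∈ F) with h | h
    · exact le_of_eq (hF v h)
    · exact le_of_lt (hS v hv h)
  have hone : ∀ x ∈ convexHull ℝ (F : Set (Fin N → ℝ)), l x = 1 := by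
    intro x hx
    exact convexHull_min (fun v hv => hF v hv) (convex_hyperplane hlin 1) hx
  have hFsub : convexHull ℝ (F : Set (Fin N → ℝ)) ⊆ convexHull ℝ (S : Set (Fin N → ℝ)) :=
    convexHull_mono (by exact_mod_cast hFS)
  have key : ∀ x ∈ convexHull ℝ (S : Set (Fin N → ℝ)), l x = 1 →
      x ∈ convexHull ℝ (F : Set (Fin N → ℝ)) := by
    intro x hx hx1
    rw [Finset.convexHull_eq] at hx
    obtain ⟨w, hw0, hw1, hxc⟩ := hx
    have hxsum : x = ∑ v ∈ S, w v • v := by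
      rw [← hxc, Finset.centerMass, hw1, inv_one, one_smul]; rfl
    have hlx : l x = ∑ v ∈ S, w v * l v := by
      rw [hxsum, map_sum]
      exact Finset.sum_congr rfl fun v _ => by simp
    have hzero : ∀ v ∈ S, v ∉ F → w v = 0 := by
      intro v hv hvF
      by_contra hwv
      have hwvpos : 0 < w v := lt_of_le_of_ne (hw0 v hv) (Ne.symm hwv)
      have hlt : ∑ u ∈ S, w u * l u < ∑ u ∈ S, w u := by
        refine Finset.sum_lt_sum (fun u hu => ?_) ⟨v, hv, ?_⟩
        · rcases Classical.em (u ∈ F) with h | h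
          · rw [hF u h, mul_one]
          · calc w u * l u ≤ w u * 1 := by
                  exact mul_le_mul_of_nonneg_left (le_of_lt (hS u hu h)) (hw0 u hu)
              _ = w u := mul_one _
        · calc w v * l v < w v * 1 := by
                exact mul_lt_mul_of_pos_left (hS v hv hvF) hwvpos
            _ = w v := mul_one _
      rw [← hlx, hx1, hw1] at hlt
      exact lt_irrefl _ hlt
    have hsumF : ∑ v ∈ F, w v = 1 := by
      rw [← hw1]
      exact (Finset.sum_subset hFS (fun v hv hvF => hzero v hv hvF)).symm ▸ rfl
    have hcm : F.centerMass w id = x := by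
      rw [Finset.centerMass_subset id hFS hzero, hxc]
    rw [← hcm]
    exact F.centerMass_mem_convexHull (fun v hv => hw0 v (hFS hv))
      (by rw [hsumF]; exact one_pos) (fun v hv => Finset.mem_coe.2 hv)
  have hexp : IsExposed ℝ (convexHull ℝ (S : Set (Fin N → ℝ)))
      (convexHull ℝ (F : Set (Fin N → ℝ))) := by
    intro _
    refine ⟨l, ?_⟩
    ext x
    constructor
    · intro hx
      exact ⟨hFsub hx, fun y hy => by rw [hone x hx]; exact hle y hy⟩
    · rintro ⟨hxS, hmax⟩
      obtain ⟨v0, hv0⟩ := hne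
      have hv0c : (v0 : Fin N → ℝ) ∈ convexHull ℝ (F : Set (Fin N → ℝ)) :=
        subset_convexHull ℝ _ hv0
      have h1 : (1 : ℝ) ≤ l x := by
        rw [← hF v0 hv0]; exact hmax v0 (hFsub hv0c)
      exact key x hxS (le_antisymm (hle x hxS) h1)
  exact hexp.isExtreme

lemma sum_ind_helper {E : Type*} [DecidableEq E] {M : Type*} [AddCommGroup M] [Module ℝ M]
    (A B C : Finset E) (hAB : Disjoint A B) (hAC : Disjoint A C) (hBC : Disjoint B C)
    (φ : E → M) :
    ∑ v ∈ A ∪ B ∪ C, (if v ∈ A then (1:ℝ) else if v ∈ B then -1 else 0) • φ v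
      = ∑ v ∈ A, φ v - ∑ v ∈ B, φ v := by
  rw [Finset.sum_union (Finset.disjoint_union_left.mpr ⟨hAC, hBC⟩), Finset.sum_union hAB]
  have h1 : ∑ v ∈ A, (if v ∈ A then (1:ℝ) else if v ∈ B then -1 else 0) • φ v
      = ∑ v ∈ A, φ v :=
    Finset.sum_congr rfl fun v hv => by rw [if_pos hv, one_smul]
  have h2 : ∑ v ∈ B, (if v ∈ A then (1:ℝ) else if v ∈ B then -1 else 0) • φ v
      = -∑ v ∈ B, φ v := by
    rw [← Finset.sum_neg_distrib]
    exact Finset.sum_congr rfl fun v hv => by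
      rw [if_neg (Finset.disjoint_right.mp hAB hv), if_pos hv, neg_one_smul]
  have h3 : ∑ v ∈ C, (if v ∈ A then (1:ℝ) else if v ∈ B then -1 else 0) • φ v = 0 := by
    refine Finset.sum_eq_zero fun v hv => ?_
    rw [if_neg (Finset.disjoint_right.mp hAC hv), if_neg (Finset.disjoint_right.mp hBC hv),
      zero_smul]
  rw [h1, h2, h3, add_zero, sub_eq_add_neg]

lemma exists_functional {N n : ℕ} (S V1 V2 V3 : Finset (Fin N → ℝ))
    (hScard : S.card = n + 2)
    (hunion : V1 ∪ V2 ∪ V3 = S)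
    (hd12 : Disjoint V1 V2) (hd13 : Disjoint V1 V3) (hd23 : Disjoint V2 V3)
    (hne1 : V1.Nonempty) (hne2 : V2.Nonempty) (hne3 : V3.Nonempty)
    (hsum1 : ∑ v ∈ V1, v = fun _ => (1 : ℝ))
    (hsum2 : ∑ v ∈ V2, v = fun _ => (1 : ℝ))
    (hsum3 : ∑ v ∈ V3, v = fun _ => (1 : ℝ))
    (hspan : Module.finrank ℝ (Submodule.span ℝ (S : Set (Fin N → ℝ))) = n)
    (g : (Fin N → ℝ) → ℝ)
    (hg1 : ∑ v ∈ V1, g v = 0) (hg2 : ∑ v ∈ V2, g v = 0) (hg3 : ∑ v ∈ V3, g v = 0) :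
    ∃ l : (Fin N → ℝ) →L[ℝ] ℝ, ∀ v ∈ S, l v = g v := by
  classical
  have hu2 : V2 ∪ V3 ∪ V1 = S := by
    rw [← hunion]; ext x; simp only [Finset.mem_union]; tauto
  let e : ({x // x ∈ S} → ℝ) →ₗ[ℝ] (Fin N → ℝ) :=
    Fintype.linearCombination ℝ (fun v : {x // x ∈ S} => (v : Fin N → ℝ))
  have hrange : LinearMap.range e = Submodule.span ℝ (S : Set (Fin N → ℝ)) := by
    rw [Fintype.range_linearCombination]
    congr 1
    rw [Subtype.range_coe_subtype]
    simp
  have hkerrank : Module.finrank ℝ (LinearMap.ker e) = 2 := by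
    have h := LinearMap.finrank_range_add_finrank_ker e
    rw [hrange, hspan, Module.finrank_fintype_fun_eq_card, Fintype.card_coe, hScard] at h
    omega
  let r1 : {x // x ∈ S} → ℝ :=
    fun v => if (v : Fin N → ℝ) ∈ V1 then 1 else if (v : Fin N → ℝ) ∈ V2 then -1 else 0
  let r2 : {x // x ∈ S} → ℝ :=
    fun v => if (v : Fin N → ℝ) ∈ V2 then 1 else if (v : Fin N → ℝ) ∈ V3 then -1 else 0
  have hsum_attach : ∀ (M : Type) (_ : AddCommGroup M) (_ : Module ℝ M) (φ : (Fin N → ℝ) → M)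
      (c : (Fin N → ℝ) → ℝ),
      ∑ v : {x // x ∈ S}, c (v : Fin N → ℝ) • φ (v : Fin N → ℝ) = ∑ v ∈ S, c v • φ v := by
    intro M _ _ φ c
    rw [← Finset.sum_attach S (fun v => c v • φ v)]
    rfl
  have he1 : e r1 = 0 := by
    show ∑ v : {x // x ∈ S}, r1 v • (v : Fin N → ℝ) = 0
    rw [hsum_attach (Fin N → ℝ) inferInstance inferInstance (fun v => v)
      (fun v => if v ∈ V1 then (1:ℝ) else if v ∈ V2 then -1 else 0)]
    rw [← hunion, sum_ind_helper V1 V2 V3 hd12 hd13 hd23, hsum1, hsum2, sub_self]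
  have he2 : e r2 = 0 := by
    show ∑ v : {x // x ∈ S}, r2 v • (v : Fin N → ℝ) = 0
    rw [hsum_attach (Fin N → ℝ) inferInstance inferInstance (fun v => v)
      (fun v => if v ∈ V2 then (1:ℝ) else if v ∈ V3 then -1 else 0)]
    rw [← hu2, sum_ind_helper V2 V3 V1 hd23 hd12.symm hd13.symm, hsum2, hsum3, sub_self]
  let ψ : ({x // x ∈ S} → ℝ) →ₗ[ℝ] ℝ :=
    Fintype.linearCombination ℝ (fun v : {x // x ∈ S} => g (v : Fin N → ℝ))
  have hψ1 : ψ r1 = 0 := by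
    show ∑ v : {x // x ∈ S}, r1 v • g (v : Fin N → ℝ) = 0
    rw [hsum_attach ℝ inferInstance inferInstance g
      (fun v => if v ∈ V1 then (1:ℝ) else if v ∈ V2 then -1 else 0)]
    rw [← hunion, sum_ind_helper V1 V2 V3 hd12 hd13 hd23, hg1, hg2, sub_self]
  have hψ2 : ψ r2 = 0 := by
    show ∑ v : {x // x ∈ S}, r2 v • g (v : Fin N → ℝ) = 0
    rw [hsum_attach ℝ inferInstance inferInstance g
      (fun v => if v ∈ V2 then (1:ℝ) else if v ∈ V3 then -1 else 0)]
    rw [← hu2, sum_ind_helper V2 V3 V1 hd23 hd12.symm hd13.symm, hg2, hg3, sub_self]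
  obtain ⟨u1, hu1⟩ := hne1
  obtain ⟨u3, hu3⟩ := hne3
  have hu1S : u1 ∈ S := by
    rw [← hunion]; exact Finset.mem_union_left _ (Finset.mem_union_left _ hu1)
  have hu3S : u3 ∈ S := by rw [← hunion]; exact Finset.mem_union_right _ hu3
  have hind : LinearIndependent ℝ ![r1, r2] := by
    rw [LinearIndependent.pair_iff]
    intro s t hst
    have h1 := congrFun hst ⟨u1, hu1S⟩
    have h3 := congrFun hst ⟨u3, hu3S⟩
    simp only [Pi.add_apply, Pi.smul_apply, smul_eq_mul, Pi.zero_apply, r1, r2] at h1 h3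
    rw [if_pos hu1, if_neg (Finset.disjoint_left.mp hd12 hu1),
      if_neg (Finset.disjoint_left.mp hd13 hu1)] at h1
    rw [if_neg (Finset.disjoint_right.mp hd13 hu3), if_neg (Finset.disjoint_right.mp hd23 hu3),
      if_neg (Finset.disjoint_right.mp hd23 hu3), if_pos hu3] at h3
    constructor
    · linarith
    · linarith
  have hP : Submodule.span ℝ (Set.range ![r1, r2]) = LinearMap.ker e := by
    apply Submodule.eq_of_le_of_finrank_le
    · rw [Submodule.span_le]
      rintro x ⟨i, rfl⟩
      fin_cases i
      · exact LinearMap.mem_ker.mpr he1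
      · exact LinearMap.mem_ker.mpr he2
    · rw [hkerrank, finrank_span_eq_card hind, Fintype.card_fin]
  have hker_psi : ∀ c : {x // x ∈ S} → ℝ, e c = 0 → ψ c = 0 := by
    intro c hc
    have hmem : c ∈ Submodule.span ℝ (Set.range ![r1, r2]) := by
      rw [hP]; exact LinearMap.mem_ker.mpr hc
    have hsub : Submodule.span ℝ (Set.range ![r1, r2]) ≤ LinearMap.ker ψ := by
      rw [Submodule.span_le]
      rintro x ⟨i, rfl⟩
      fin_cases i
      · exact LinearMap.mem_ker.mpr hψ1
      · exact LinearMap.mem_ker.mpr hψ2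
    exact LinearMap.mem_ker.mp (hsub hmem)
  have hmemW : ∀ c, e c ∈ Submodule.span ℝ (S : Set (Fin N → ℝ)) := fun c => by
    rw [← hrange]; exact LinearMap.mem_range_self e c
  let e' : ({x // x ∈ S} → ℝ) →ₗ[ℝ] Submodule.span ℝ (S : Set (Fin N → ℝ)) :=
    LinearMap.codRestrict _ e hmemW
  have hsurj : LinearMap.range e' = ⊤ := by
    rw [LinearMap.range_eq_top]
    rintro ⟨w, hw⟩
    rw [← hrange] at hw
    obtain ⟨c, hc⟩ := hw
    exact ⟨c, Subtype.ext hc⟩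
  obtain ⟨σ, hσ⟩ := e'.exists_rightInverse_of_surjective hsurj
  obtain ⟨q, hq⟩ := Submodule.exists_isCompl (Submodule.span ℝ (S : Set (Fin N → ℝ)))
  let π : (Fin N → ℝ) →ₗ[ℝ] Submodule.span ℝ (S : Set (Fin N → ℝ)) :=
    Submodule.linearProjOfIsCompl _ q hq
  let l₀ : (Fin N → ℝ) →ₗ[ℝ] ℝ := ψ.comp (σ.comp π)
  refine ⟨LinearMap.toContinuousLinearMap l₀, ?_⟩
  intro v hv
  have hvW : v ∈ Submodule.span ℝ (S : Set (Fin N → ℝ)) :=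
    Submodule.subset_span (Finset.mem_coe.mpr hv)
  have hπv : π v = ⟨v, hvW⟩ := Submodule.linearProjOfIsCompl_apply_left hq ⟨v, hvW⟩
  let c1 : {x // x ∈ S} → ℝ := Pi.single (⟨v, hv⟩ : {x // x ∈ S}) (1:ℝ)
  have hec1 : e c1 = v := by
    show Fintype.linearCombination ℝ _ (Pi.single _ _) = v
    rw [Fintype.linearCombination_apply_single, one_smul]
  have hψc1 : ψ c1 = g v := by
    show Fintype.linearCombination ℝ _ (Pi.single _ _) = g v
    rw [Fintype.linearCombination_apply_single, smul_eq_mul, one_mul]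
  have he'σ : e' (σ ⟨v, hvW⟩) = ⟨v, hvW⟩ := by
    have := LinearMap.ext_iff.mp hσ ⟨v, hvW⟩
    simpa using this
  have heσ : e (σ ⟨v, hvW⟩) = v := by
    have h : ((e' (σ ⟨v, hvW⟩) : Submodule.span ℝ (S : Set (Fin N → ℝ))) : Fin N → ℝ)
        = e (σ ⟨v, hvW⟩) := rfl
    rw [← h, he'σ]
  have hdiff : e (σ ⟨v, hvW⟩ - c1) = 0 := by
    rw [map_sub, heσ, hec1, sub_self]
  have hψσ : ψ (σ ⟨v, hvW⟩) = g v := by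
    have h0 := hker_psi _ hdiff
    rw [map_sub, hψc1] at h0
    linarith
  show l₀ v = g v
  show ψ (σ (π v)) = g v
  rw [hπv, hψσ]

theorem stmt_17
    (n : ℕ) (hn : 0 < n)
    (S V1 V2 V3 : Finset (Fin (2 * n) → ℝ))
    (h01 : ∀ v ∈ S, ∀ i, v i = 0 ∨ v i = 1)
    (hScard : S.card = n + 2)
    (hunion : V1 ∪ V2 ∪ V3 = S)
    (hd12 : Disjoint V1 V2) (hd13 : Disjoint V1 V3) (hd23 : Disjoint V2 V3)
    (hne1 : V1.Nonempty) (hne2 : V2.Nonempty) (hne3 : V3.Nonempty)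
    (hsum1 : ∑ v ∈ V1, v = fun _ => (1 : ℝ))
    (hsum2 : ∑ v ∈ V2, v = fun _ => (1 : ℝ))
    (hsum3 : ∑ v ∈ V3, v = fun _ => (1 : ℝ))
    (hspan : Module.finrank ℝ (Submodule.span ℝ (S : Set (Fin (2 * n) → ℝ))) = n)
    (hm : 2 ≤ V1.card) (h12 : V1.card = V2.card) (h23 : V2.card = V3.card)
    : ∀ F ⊆ S, F.Nonempty → F.card ≤ V2.card - 1 →
      F ≠ S ∧
      IsExtreme ℝ (convexHull ℝ (S : Set (Fin (2 * n) → ℝ)))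
        (convexHull ℝ (F : Set (Fin (2 * n) → ℝ))) := by
  classical
  intro F hFS hFne hFcard
  have hcards : V1.card + V2.card + V3.card = n + 2 := by
    rw [← hScard, ← hunion,
      Finset.card_union_of_disjoint (Finset.disjoint_union_left.mpr ⟨hd13, hd23⟩),
      Finset.card_union_of_disjoint hd12]
  have hm2 : 2 ≤ V2.card := h12 ▸ hm
  have hFm : F.card < V2.card := by omega
  -- F ≠ S
  have hFneS : F ≠ S := by
    intro h
    rw [h] at hFm
    omega
  refine ⟨hFneS, ?_⟩
  -- define weights
  set c : Finset (Fin (2 * n) → ℝ) → ℝ :=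
    fun W => -(((W ∩ F).card : ℝ)) / ((W \ F).card) with hc_def
  set g : (Fin (2 * n) → ℝ) → ℝ := fun v =>
    if v ∈ F then 1 else if v ∈ V1 then c V1 else if v ∈ V2 then c V2 else c V3 with hg_def
  have hgF : ∀ v ∈ F, g v = 1 := fun v hv => by rw [hg_def]; exact if_pos hv
  have hcle : ∀ W : Finset (Fin (2 * n) → ℝ), c W ≤ 0 := by
    intro W
    show -(((W ∩ F).card : ℝ)) / ((W \ F).card) ≤ 0
    rw [neg_div, neg_nonpos]
    positivity
  have hsd : ∀ W : Finset (Fin (2 * n) → ℝ), W.card = V2.card → (W \ F).card ≠ 0 := by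
    intro W hW
    have h1 : W.card - F.card ≤ (W \ F).card := Finset.le_card_sdiff F W
    omega
  -- sum of g over a part is zero
  have hgsum : ∀ W : Finset (Fin (2 * n) → ℝ),
      (∀ v ∈ W, v ∉ F → g v = c W) → (W \ F).card ≠ 0 → ∑ v ∈ W, g v = 0 := by
    intro W hW hb
    rw [← Finset.sum_inter_add_sum_sdiff W F g]
    have h1 : ∑ v ∈ W ∩ F, g v = ((W ∩ F).card : ℝ) := by
      rw [Finset.sum_congr rfl (fun v hv => hgF v (Finset.mem_inter.mp hv).2),
        Finset.sum_const, nsmul_eq_mul, mul_one]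
    have h2 : ∑ v ∈ W \ F, g v = ((W \ F).card : ℝ) * c W := by
      rw [Finset.sum_congr rfl
        (fun v hv => hW v (Finset.mem_sdiff.mp hv).1 (Finset.mem_sdiff.mp hv).2),
        Finset.sum_const, nsmul_eq_mul]
    rw [h1, h2, hc_def]
    have hbne : (((W \ F).card : ℕ) : ℝ) ≠ 0 := Nat.cast_ne_zero.mpr hb
    field_simp
    ring
  have hg1 : ∑ v ∈ V1, g v = 0 := by
    refine hgsum V1 (fun v hv hvF => ?_) (hsd V1 h12)
    rw [hg_def]
    simp only [if_neg hvF, if_pos hv]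
  have hg2 : ∑ v ∈ V2, g v = 0 := by
    refine hgsum V2 (fun v hv hvF => ?_) (hsd V2 rfl)
    rw [hg_def]
    simp only [if_neg hvF, if_neg (Finset.disjoint_right.mp hd12 hv), if_pos hv]
  have hg3 : ∑ v ∈ V3, g v = 0 := by
    refine hgsum V3 (fun v hv hvF => ?_) (hsd V3 h23.symm)
    rw [hg_def]
    simp only [if_neg hvF, if_neg (Finset.disjoint_right.mp hd13 hv),
      if_neg (Finset.disjoint_right.mp hd23 hv)]
  have hglt : ∀ v ∈ S, v ∉ F → g v < 1 := by
    intro v hv hvF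
    rw [hg_def]
    simp only [if_neg hvF]
    have h1 := hcle V1
    have h2 := hcle V2
    have h3 := hcle V3
    split_ifs <;> linarith
  obtain ⟨l, hl⟩ := exists_functional S V1 V2 V3 hScard hunion hd12 hd13 hd23
    hne1 hne2 hne3 hsum1 hsum2 hsum3 hspan g hg1 hg2 hg3
  exact face_of_functional S F hFS hFne l
    (fun v hv => by rw [hl v (hFS hv)]; exact hgF v hv)
    (fun v hv hvF => by rw [hl v hv]; exact hglt v hv hvF)
end

section
/- (Pyramid structure of the facet complex of Q, case m₁ = m₂ = m₃ ≥ 2) Assume m₁ = m₂ = m₃ ≥ 2 and let w ∈ V₁, and set Q = conv(S ∖ {w}). Then for every v ∈ V₁ ∖ {w}, the point v does not belong to the affine span of S ∖ {w, v}; hence Q is an (m₁−1)-fold pyramid whose apexes are the points of V₁ ∖ {w}. -/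
theorem stmt_18
    (n : ℕ) (hn : 0 < n)
    (S V1 V2 V3 : Finset (Fin (2 * n) → ℝ))
    (h01 : ∀ v ∈ S, ∀ i, v i = 0 ∨ v i = 1)
    (hScard : S.card = n + 2)
    (hunion : V1 ∪ V2 ∪ V3 = S)
    (hd12 : Disjoint V1 V2) (hd13 : Disjoint V1 V3) (hd23 : Disjoint V2 V3)
    (hne1 : V1.Nonempty) (hne2 : V2.Nonempty) (hne3 : V3.Nonempty)
    (hsum1 : ∑ v ∈ V1, v = fun _ => (1 : ℝ))
    (hsum2 : ∑ v ∈ V2, v = fun _ => (1 : ℝ))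
    (hsum3 : ∑ v ∈ V3, v = fun _ => (1 : ℝ))
    (hspan : Module.finrank ℝ (Submodule.span ℝ (S : Set (Fin (2 * n) → ℝ))) = n)
    (hm : 2 ≤ V1.card) (h12 : V1.card = V2.card) (h23 : V2.card = V3.card)
    : ∀ w ∈ V1, ∀ v ∈ V1 \ {w},
      v ∉ affineSpan ℝ ((S \ {w, v} : Finset (Fin (2 * n) → ℝ)) : Set (Fin (2 * n) → ℝ)) := by
  classical
  intro w hw v hv hmem
  obtain ⟨hv1, hvw⟩ : v ∈ V1 ∧ v ≠ w := by
    simpa [Finset.mem_sdiff] using hv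
  have hsub1 : V1 ⊆ S := by
    rw [← hunion]; intro x hx; exact Finset.mem_union_left _ (Finset.mem_union_left _ hx)
  have hsub2 : V2 ⊆ S := by
    rw [← hunion]; intro x hx; exact Finset.mem_union_left _ (Finset.mem_union_right _ hx)
  have hsub3 : V3 ⊆ S := by
    rw [← hunion]; intro x hx; exact Finset.mem_union_right _ hx
  have hwS : w ∈ S := hsub1 hw
  have hvS : v ∈ S := hsub1 hv1
  -- the linear combination map
  set φ : (↥S → ℝ) →ₗ[ℝ] (Fin (2 * n) → ℝ) :=
    Fintype.linearCombination ℝ (fun x : ↥S => (x : (Fin (2 * n) → ℝ))) with hφ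
  have hφapp : ∀ c : (Fin (2 * n) → ℝ) → ℝ, φ (fun x => c ↑x) = ∑ u ∈ S, c u • u := by
    intro c
    rw [hφ, Fintype.linearCombination_apply]
    exact Finset.sum_coe_sort S (fun u => c u • u)
  -- rank-nullity : kernel has dimension 2
  have hrange : LinearMap.range φ = Submodule.span ℝ (S : Set (Fin (2 * n) → ℝ)) := by
    rw [hφ, Fintype.range_linearCombination]
    congr 1
    simp [Subtype.range_coe_subtype, Set.ext_iff]
  have hkerdim : Module.finrank ℝ (LinearMap.ker φ) = 2 := by
    have h1 := LinearMap.finrank_range_add_finrank_ker φ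
    rw [hrange, hspan, Module.finrank_fintype_fun_eq_card, Fintype.card_coe, hScard] at h1
    omega
  -- two relations
  set r1fun : (Fin (2 * n) → ℝ) → ℝ := fun u => if u ∈ V1 then 1 else if u ∈ V2 then -1 else 0 with hr1fun
  set r2fun : (Fin (2 * n) → ℝ) → ℝ := fun u => if u ∈ V1 then 1 else if u ∈ V3 then -1 else 0 with hr2fun
  set r1 : ↥S → ℝ := fun x => r1fun ↑x with hr1
  set r2 : ↥S → ℝ := fun x => r2fun ↑x with hr2
  have hSsplit : S = (V1 ∪ V2) ∪ V3 := hunion.symm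
  have hdisj12 : Disjoint (V1 ∪ V2) V3 := Finset.disjoint_union_left.2 ⟨hd13, hd23⟩
  have hsumsplit : ∀ f : (Fin (2 * n) → ℝ) → (Fin (2 * n) → ℝ), ∑ u ∈ S, f u = ∑ u ∈ V1, f u + ∑ u ∈ V2, f u + ∑ u ∈ V3, f u := by
    intro f
    rw [hSsplit, Finset.sum_union hdisj12, Finset.sum_union hd12]
  have hr1ker : r1 ∈ LinearMap.ker φ := by
    rw [LinearMap.mem_ker, hr1, hφapp r1fun, hsumsplit]
    have e1 : ∑ u ∈ V1, r1fun u • u = ∑ u ∈ V1, u := by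
      apply Finset.sum_congr rfl; intro u hu; rw [hr1fun]; simp [hu]
    have e2 : ∑ u ∈ V2, r1fun u • u = -∑ u ∈ V2, u := by
      rw [← Finset.sum_neg_distrib]
      apply Finset.sum_congr rfl; intro u hu
      have h1 : u ∉ V1 := Finset.disjoint_right.1 hd12 hu
      rw [hr1fun]; simp [h1, hu]
    have e3 : ∑ u ∈ V3, r1fun u • u = 0 := by
      apply Finset.sum_eq_zero; intro u hu
      have h1 : u ∉ V1 := Finset.disjoint_right.1 hd13 hu
      have h2 : u ∉ V2 := Finset.disjoint_right.1 hd23 hu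
      rw [hr1fun]; simp [h1, h2]
    rw [e1, e2, e3, hsum1, hsum2]; abel
  have hr2ker : r2 ∈ LinearMap.ker φ := by
    rw [LinearMap.mem_ker, hr2, hφapp r2fun, hsumsplit]
    have e1 : ∑ u ∈ V1, r2fun u • u = ∑ u ∈ V1, u := by
      apply Finset.sum_congr rfl; intro u hu; rw [hr2fun]; simp [hu]
    have e2 : ∑ u ∈ V2, r2fun u • u = 0 := by
      apply Finset.sum_eq_zero; intro u hu
      have h1 : u ∉ V1 := Finset.disjoint_right.1 hd12 hu
      have h3 : u ∉ V3 := Finset.disjoint_left.1 hd23 hu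
      rw [hr2fun]; simp [h1, h3]
    have e3 : ∑ u ∈ V3, r2fun u • u = -∑ u ∈ V3, u := by
      rw [← Finset.sum_neg_distrib]
      apply Finset.sum_congr rfl; intro u hu
      have h1 : u ∉ V1 := Finset.disjoint_right.1 hd13 hu
      rw [hr2fun]; simp [h1, hu]
    rw [e1, e2, e3, hsum1, hsum3]; abel
  -- r1, r2 linearly independent
  obtain ⟨x2, hx2⟩ := hne2
  obtain ⟨x3, hx3⟩ := hne3
  have hx2V1 : x2 ∉ V1 := Finset.disjoint_right.1 hd12 hx2
  have hx3V1 : x3 ∉ V1 := Finset.disjoint_right.1 hd13 hx3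
  have hx3V2 : x3 ∉ V2 := Finset.disjoint_right.1 hd23 hx3
  have hx2V3 : x2 ∉ V3 := Finset.disjoint_left.1 hd23 hx2
  have hli : LinearIndependent ℝ ![r1, r2] := by
    rw [LinearIndependent.pair_iff]
    intro s t hst
    have h2 := congrFun hst ⟨x2, hsub2 hx2⟩
    have h3 := congrFun hst ⟨x3, hsub3 hx3⟩
    simp only [Pi.add_apply, Pi.smul_apply, Pi.zero_apply, smul_eq_mul, hr1, hr2,
      hr1fun, hr2fun] at h2 h3
    rw [if_neg hx2V1, if_pos hx2, if_neg hx2V1, if_neg hx2V3] at h2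
    rw [if_neg hx3V1, if_neg hx3V2, if_neg hx3V1, if_pos hx3] at h3
    constructor <;> linarith
  -- kernel equals span of r1, r2
  have hker : LinearMap.ker φ = Submodule.span ℝ {r1, r2} := by
    have hrange2 : Set.range ![r1, r2] = {r1, r2} := by
      ext x
      constructor
      · rintro ⟨i, rfl⟩
        fin_cases i <;> simp
      · rintro (rfl | rfl)
        · exact ⟨0, rfl⟩
        · exact ⟨1, rfl⟩
    have hle : Submodule.span ℝ {r1, r2} ≤ LinearMap.ker φ := by
      rw [Submodule.span_le]
      rintro x (rfl | rfl)
      · exact hr1ker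
      · exact hr2ker
    have hdim : Module.finrank ℝ (Submodule.span ℝ {r1, r2}) = 2 := by
      rw [← hrange2, finrank_span_eq_card hli]
      simp
    exact (Submodule.eq_of_le_of_finrank_le hle (by rw [hkerdim, hdim])).symm
  -- extract an affine combination expressing v
  set t : Finset (Fin (2 * n) → ℝ) := S \ {w, v} with ht
  have htrange : (t : Set (Fin (2 * n) → ℝ)) = Set.range (fun x : ↥t => (x : (Fin (2 * n) → ℝ))) := by
    simp [Subtype.range_coe_subtype, Set.ext_iff]
  rw [htrange] at hmem
  obtain ⟨wts, hwtsum, hveq⟩ := eq_affineCombination_of_mem_affineSpan_of_fintype hmem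
  rw [Finset.affineCombination_eq_linear_combination _ _ _ hwtsum] at hveq
  set d : (Fin (2 * n) → ℝ) → ℝ := fun u => if h : u ∈ t then wts ⟨u, h⟩ else 0 with hd
  have hdzero : ∀ u, u ∉ t → d u = 0 := by
    intro u hu; rw [hd]; exact dif_neg hu
  have hveq2 : v = ∑ u ∈ t, d u • u := by
    rw [hveq]
    rw [← Finset.sum_coe_sort t (fun u => d u • u)]
    apply Finset.sum_congr rfl
    intro x _
    rw [hd]
    simp
  -- build the bad relation
  set cfun : (Fin (2 * n) → ℝ) → ℝ := fun u => if u = v then 1 else -d u with hcfun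
  set c : ↥S → ℝ := fun x => cfun ↑x with hc
  have hwt : w ∉ t := by rw [ht]; simp
  have hvt : v ∉ t := by rw [ht]; simp
  have hcker : c ∈ LinearMap.ker φ := by
    rw [LinearMap.mem_ker, hc, hφapp cfun]
    rw [← Finset.add_sum_erase S _ hvS]
    have e1 : cfun v • v = v := by rw [hcfun]; simp
    have e2 : ∑ u ∈ S.erase v, cfun u • u = -∑ u ∈ t, d u • u := by
      rw [← Finset.sum_neg_distrib]
      rw [Finset.sum_congr rfl (fun u hu => ?_), Finset.sum_subset (s₁ := t) ?_ ?_]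
      · intro u hu
        rw [ht] at hu
        simp only [Finset.mem_sdiff] at hu
        exact Finset.mem_erase.2 ⟨by simp at hu; tauto, hu.1⟩
      · intro u _ hut
        rw [hdzero u hut]; simp
      · have huv : u ≠ v := (Finset.mem_erase.1 hu).1
        rw [hcfun]
        simp [huv]
    rw [e1, e2, ← hveq2]
    abel
  -- derive contradiction
  rw [hker] at hcker
  obtain ⟨a, b, hab⟩ := Submodule.mem_span_pair.1 hcker
  have hA := congrFun hab ⟨v, hvS⟩
  have hB := congrFun hab ⟨w, hwS⟩
  simp only [Pi.add_apply, Pi.smul_apply, smul_eq_mul, hr1, hr2, hr1fun, hr2fun, hc, hcfun] at hA hB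
  rw [if_pos trivial] at hA
  rw [if_pos hv1, if_pos hv1] at hA
  rw [if_pos hw, if_pos hw, if_neg (Ne.symm hvw), hdzero w hwt, neg_zero] at hB
  linarith
end
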